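/- arXiv:math/0110007 — 3 statements merged into one kernel-verified Lean document; each statement's English description precedes it below -/
import Mathlib

section
/- For every positive integer r, the Fibonacci number f_{2r} equals the alternating sum of ballot/Catalan-type numbers: f_{2r} = c(2r, r-1) - c(2r, r-3) + c(2r, r-6) - c(2r, r-8) + c(2r, r-11) - c(2r, r-13) + ..., where the offsets subtracted from r follow the pattern 1,3,6,8,11,13,16,... (alternating increments of 2 and 3), the sum terminating when the lower index becomes negative. -/
/-!
STATEMENT 0.  Fibonacci numbers f_0 = 0, f_1 = 1, f_{n+1} = f_n + f_{n-1}
(Mathlib's `Nat.fib`).  Ballot/Catalan-type numbers c(n,j) = C(n,j) - C(n,j-1),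
with C(n,j) = 0 for j < 0 (so c(n,j) = 0 for j < 0).

Claim: for every positive integer r,
  f_{2r} = c(2r, r-1) - c(2r, r-3) + c(2r, r-6) - c(2r, r-8)
           + c(2r, r-11) - c(2r, r-13) + c(2r, r-16) - … ,
the offsets 1,3,6,8,11,13,16,… alternating increments of 2 and 3
(offset m = 5·(m/2) + 1 for m even, 5·(m/2) + 3 for m odd), the sum
terminating when the lower index becomes negative (all such terms vanish,
so we may sum over m < r + 1, since offset m > r once m > r).
-/

/-- binomial coefficient C(n,j) with C(n,j) = 0 for j < 0, as an integer -/
def C (n : ℕ) (j : ℤ) : ℤ := if j < 0 then 0 else (n.choose j.toNat : ℤ)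

/-- c(n,j) = C(n,j) - C(n,j-1) -/
def c (n : ℕ) (j : ℤ) : ℤ := C n j - C n (j - 1)

/-- the m-th offset: 1, 3, 6, 8, 11, 13, 16, … -/
def offset (m : ℕ) : ℤ := 5 * (m / 2) + if m % 2 = 0 then 1 else 3


def w (t : ℕ) : ℤ :=
  if t % 5 = 0 then 0 else if t % 5 = 1 then -1 else if t % 5 = 2 then 1
  else if t % 5 = 3 then 1 else -1

def A (n : ℕ) : ℤ := ∑ k ∈ Finset.range (n+1), w (2*k + 4*n) * (n.choose k : ℤ)

lemma pascal_sum (f : ℕ → ℤ) (n : ℕ) :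
    ∑ k ∈ Finset.range (n+2), f k * ((n+1).choose k : ℤ) =
    ∑ k ∈ Finset.range (n+1), (f k + f (k+1)) * (n.choose k : ℤ) := by
  rw [Finset.sum_range_succ' (fun k => f k * ((n+1).choose k : ℤ)) (n+1)]
  simp only [Nat.choose_succ_succ, Nat.choose_zero_right, Nat.cast_add, Nat.cast_one]
  have h1 : ∑ i ∈ Finset.range (n+1), f (i+1) * ((n.choose i : ℤ) + (n.choose (i+1) : ℤ))
      = ∑ i ∈ Finset.range (n+1), f (i+1) * (n.choose i : ℤ)
        + ∑ i ∈ Finset.range (n+1), f (i+1) * (n.choose (i+1) : ℤ) := by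
    rw [← Finset.sum_add_distrib]; exact Finset.sum_congr rfl fun i _ => by ring
  rw [h1]
  have h2 : ∑ i ∈ Finset.range (n+1), f (i+1) * (n.choose (i+1) : ℤ)
      = ∑ i ∈ Finset.range n, f (i+1) * (n.choose (i+1) : ℤ) := by
    rw [Finset.sum_range_succ]
    simp [Nat.choose_succ_self]
  have h3 : ∑ k ∈ Finset.range (n+1), f k * (n.choose k : ℤ)
      = ∑ i ∈ Finset.range n, f (i+1) * (n.choose (i+1) : ℤ) + f 0 * (n.choose 0 : ℤ) :=
    Finset.sum_range_succ' _ n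
  have h4 : ∑ k ∈ Finset.range (n+1), (f k + f (k+1)) * (n.choose k : ℤ)
      = ∑ k ∈ Finset.range (n+1), f k * (n.choose k : ℤ)
        + ∑ k ∈ Finset.range (n+1), f (k+1) * (n.choose k : ℤ) := by
    rw [← Finset.sum_add_distrib]; exact Finset.sum_congr rfl fun i _ => by ring
  rw [h2, h4, h3]
  simp [Nat.choose_zero_right]
  ring

lemma w_key (t : ℕ) : w (t+8) + 2 * w (t+10) + w (t+12) + (w (t+4) + w (t+6)) = w t := by
  have h : t % 5 = 0 ∨ t % 5 = 1 ∨ t % 5 = 2 ∨ t % 5 = 3 ∨ t % 5 = 4 := by omega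
  have e4 : (t+4) % 5 = (t % 5 + 4) % 5 := by omega
  have e6 : (t+6) % 5 = (t % 5 + 1) % 5 := by omega
  have e8 : (t+8) % 5 = (t % 5 + 3) % 5 := by omega
  have e10 : (t+10) % 5 = t % 5 := by omega
  have e12 : (t+12) % 5 = (t % 5 + 2) % 5 := by omega
  rcases h with h | h | h | h | h <;> simp [w, e4, e6, e8, e10, e12, h]

lemma A_succ (n : ℕ) :
    A (n+1) = ∑ k ∈ Finset.range (n+1), (w (2*k+4*n+4) + w (2*k+4*n+6)) * (n.choose k : ℤ) := by
  have := pascal_sum (fun k => w (2*k + 4*(n+1))) n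
  simp only [A]
  rw [show n+1+1 = n+2 from rfl, this]
  exact Finset.sum_congr rfl fun k _ => by
    have a1 : 2*k + 4*(n+1) = 2*k+4*n+4 := by ring
    have a2 : 2*(k+1) + 4*(n+1) = 2*k+4*n+6 := by ring
    rw [a1, a2]

lemma A_rec (n : ℕ) : A (n+2) + A (n+1) = A n := by
  have h2 : A (n+2) = ∑ k ∈ Finset.range (n+1),
      (w (2*k+4*n+8) + 2 * w (2*k+4*n+10) + w (2*k+4*n+12)) * (n.choose k : ℤ) := by
    have p1 := pascal_sum (fun k => w (2*k + 4*(n+2))) (n+1)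
    have p2 := pascal_sum (fun k => w (2*k + 4*(n+2)) + w (2*(k+1) + 4*(n+2))) n
    simp only [A]
    rw [show n+2+1 = n+1+2 from rfl, p1, p2]
    exact Finset.sum_congr rfl fun k _ => by
      have a1 : 2*k + 4*(n+2) = 2*k+4*n+8 := by ring
      have a2 : 2*(k+1) + 4*(n+2) = 2*k+4*n+10 := by ring
      have a3 : 2*(k+1+1) + 4*(n+2) = 2*k+4*n+12 := by ring
      rw [a1, a2, a3]; ring
  rw [h2, A_succ, ← Finset.sum_add_distrib]
  simp only [A]
  exact Finset.sum_congr rfl fun k _ => by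
    have := w_key (2*k+4*n)
    nlinarith [this]

lemma A_eq (n : ℕ) : A n = (-1)^n * 2 * (Nat.fib n : ℤ) := by
  induction n using Nat.twoStepInduction with
  | zero => norm_num [A, Finset.sum_range_succ, w]
  | one => norm_num [A, Finset.sum_range_succ, w]
  | more n ih1 ih2 =>
    have h := A_rec n
    rw [ih1, ih2] at h
    have hf : (Nat.fib (n+2) : ℤ) = Nat.fib n + Nat.fib (n+1) := by
      rw [Nat.fib_add_two]; push_cast; ring
    have hs : (-1 : ℤ)^(n+2) = (-1)^n := by ring
    have hs1 : (-1 : ℤ)^(n+1) = -(-1)^n := by ring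
    rw [hs1] at h
    rw [hs, hf]
    linarith

lemma w_mod_eq {a b : ℕ} (h : a % 5 = b % 5) : w a = w b := by
  simp only [w, h]

lemma w_symm {a b : ℕ} (h : (a + b) % 5 = 0) : w a = w b := by
  have h5 : a % 5 = 0 ∨ a % 5 = 1 ∨ a % 5 = 2 ∨ a % 5 = 3 ∨ a % 5 = 4 := by omega
  rcases h5 with h5 | h5 | h5 | h5 | h5 <;>
    · have hb : b % 5 = (5 - a % 5) % 5 := by omega
      rw [h5] at hb
      norm_num at hb
      simp [w, h5, hb]

lemma c_neg {n : ℕ} {j : ℤ} (h : j < 0) : c n j = 0 := by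
  simp only [c, C, if_pos h, if_pos (by omega : j - 1 < 0)]
  ring

lemma C_nonneg {n : ℕ} {j : ℤ} (h : 0 ≤ j) : C n j = (n.choose j.toNat : ℤ) := by
  simp [C, not_lt.2 h]

lemma C_neg {n : ℕ} {j : ℤ} (h : j < 0) : C n j = 0 := by
  simp [C, h]

lemma block_sum (F : ℕ → ℤ) (K : ℕ) :
    ∑ i ∈ Finset.range (5*K), F i
      = ∑ j ∈ Finset.range K, (F (5*j) + F (5*j+1) + F (5*j+2) + F (5*j+3) + F (5*j+4)) := by
  induction K with
  | zero => simp
  | succ K ih =>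
    have : 5*(K+1) = 5*K+1+1+1+1+1 := by ring
    rw [this, Finset.sum_range_succ, Finset.sum_range_succ, Finset.sum_range_succ,
      Finset.sum_range_succ, Finset.sum_range_succ, ih, Finset.sum_range_succ]
    ring

lemma pair_sum (F : ℕ → ℤ) (K : ℕ) :
    ∑ m ∈ Finset.range (2*K), F m = ∑ j ∈ Finset.range K, (F (2*j) + F (2*j+1)) := by
  induction K with
  | zero => simp
  | succ K ih =>
    have : 2*(K+1) = 2*K+1+1 := by ring
    rw [this, Finset.sum_range_succ, Finset.sum_range_succ, ih, Finset.sum_range_succ]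
    ring

lemma half_sum (r : ℕ) :
    (Nat.fib (2*r) : ℤ) = ∑ k ∈ Finset.range r, w (2*k + 4*(2*r)) * ((2*r).choose k : ℤ) := by
  have hA : A (2*r) = 2 * (Nat.fib (2*r) : ℤ) := by
    rw [A_eq]
    have : (-1 : ℤ)^(2*r) = 1 := by
      rw [pow_mul]; norm_num
    rw [this]; ring
  set g : ℕ → ℤ := fun k => w (2*k + 4*(2*r)) * ((2*r).choose k : ℤ) with hg
  have hsplit : A (2*r) = (∑ k ∈ Finset.range (r+1), g k) + ∑ i ∈ Finset.range r, g (r+1+i) := by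
    have h1 : 2*r+1 = (r+1) + r := by ring
    rw [A, h1, Finset.sum_range_add]
  have hrefl : ∀ i ∈ Finset.range r, g (r+1+i) = g (r-1-i) := by
    intro i hi
    rw [Finset.mem_range] at hi
    have hw : w (2*(r+1+i) + 4*(2*r)) = w (2*(r-1-i) + 4*(2*r)) :=
      w_symm (by omega)
    have hc : (2*r).choose (r+1+i) = (2*r).choose (r-1-i) := by
      rw [← Nat.choose_symm (by omega : r+1+i ≤ 2*r)]
      congr 1
      omega
    simp only [hg, hw, hc]
  have h2 : ∑ i ∈ Finset.range r, g (r+1+i) = ∑ i ∈ Finset.range r, g i := by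
    rw [Finset.sum_congr rfl hrefl]
    exact Finset.sum_range_reflect g r
  have hgr : g r = 0 := by
    have : w (2*r + 4*(2*r)) = 0 := by
      simp only [w]
      have : (2*r + 4*(2*r)) % 5 = 0 := by omega
      rw [this]
      norm_num
    simp [hg, this]
  have : A (2*r) = 2 * ∑ k ∈ Finset.range r, g k := by
    rw [hsplit, h2, Finset.sum_range_succ, hgr]
    ring
  rw [this] at hA
  linarith

lemma offset_even (j : ℕ) : offset (2*j) = 5*(j:ℤ)+1 := by
  unfold offset
  rw [if_pos (by omega : 2*j % 2 = 0)]
  push_cast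
  omega

lemma offset_odd (j : ℕ) : offset (2*j+1) = 5*(j:ℤ)+3 := by
  unfold offset
  rw [if_neg (by omega : ¬ (2*j+1) % 2 = 0)]
  push_cast
  omega

theorem fib_eq_alternating_sum_of_ballot_numbers (r : ℕ) (hr : 0 < r) :
    (Nat.fib (2 * r) : ℤ) =
      ∑ m ∈ Finset.range (r + 1), (-1 : ℤ) ^ m * c (2 * r) ((r : ℤ) - offset m) := by
  set T : ℕ → ℤ := fun m => (-1 : ℤ) ^ m * c (2 * r) ((r : ℤ) - offset m) with hT
  set h : ℕ → ℤ := fun i => w (3*i+3) * C (2*r) ((r:ℤ)-1-(i:ℤ)) with hh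
  -- step 1-3 : fib = ∑_{i < r} h i
  have step1 : (Nat.fib (2*r) : ℤ) = ∑ i ∈ Finset.range r, h i := by
    rw [half_sum r, ← Finset.sum_range_reflect (fun k => w (2*k + 4*(2*r)) * ((2*r).choose k : ℤ)) r]
    refine Finset.sum_congr rfl fun i hi => ?_
    rw [Finset.mem_range] at hi
    have hw : w (2*(r-1-i) + 4*(2*r)) = w (3*i+3) := w_mod_eq (by omega)
    have hC : C (2*r) ((r:ℤ)-1-(i:ℤ)) = ((2*r).choose (r-1-i) : ℤ) := by
      rw [C_nonneg (by omega : (0:ℤ) ≤ (r:ℤ)-1-(i:ℤ))]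
      have e : ((r:ℤ)-1-(i:ℤ)).toNat = r-1-i := by omega
      rw [e]
    simp only [hh, hw, hC]
  -- step 4 : extend range
  have step2 : ∑ i ∈ Finset.range r, h i = ∑ i ∈ Finset.range (5*(r+1)), h i := by
    refine Finset.sum_subset (Finset.range_subset_range.2 (by omega)) fun i _ hi => ?_
    rw [Finset.mem_range, not_lt] at hi
    simp only [hh]
    rw [C_neg (by omega : ((r:ℤ)-1-(i:ℤ)) < 0)]
    ring
  -- step 5-6 : blocks
  have step3 : ∑ i ∈ Finset.range (5*(r+1)), h i = ∑ j ∈ Finset.range (r+1), (T (2*j) + T (2*j+1)) := by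
    rw [block_sum h (r+1)]
    refine Finset.sum_congr rfl fun j _ => ?_
    have w0 : w (3*(5*j)+3) = 1 := by
      have e : (3*(5*j)+3) % 5 = 3 := by omega
      simp [w, e]
    have w1 : w (3*(5*j+1)+3) = -1 := by
      have e : (3*(5*j+1)+3) % 5 = 1 := by omega
      simp [w, e]
    have w2 : w (3*(5*j+2)+3) = -1 := by
      have e : (3*(5*j+2)+3) % 5 = 4 := by omega
      simp [w, e]
    have w3 : w (3*(5*j+3)+3) = 1 := by
      have e : (3*(5*j+3)+3) % 5 = 2 := by omega
      simp [w, e]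
    have w4 : w (3*(5*j+4)+3) = 0 := by
      have e : (3*(5*j+4)+3) % 5 = 0 := by omega
      simp [w, e]
    have p0 : ((-1:ℤ))^(2*j) = 1 := by rw [pow_mul]; norm_num
    have p1 : ((-1:ℤ))^(2*j+1) = -1 := by rw [pow_succ, p0]; ring
    simp only [hh, hT, w0, w1, w2, w3, w4, p0, p1, offset_even, offset_odd, c]
    have a1 : (r:ℤ)-1-((5*j : ℕ):ℤ) = (r:ℤ)-(5*(j:ℤ)+1) := by push_cast; ring
    have a2 : (r:ℤ)-1-((5*j+1 : ℕ):ℤ) = (r:ℤ)-(5*(j:ℤ)+1)-1 := by push_cast; ring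
    have a3 : (r:ℤ)-1-((5*j+2 : ℕ):ℤ) = (r:ℤ)-(5*(j:ℤ)+3) := by push_cast; ring
    have a4 : (r:ℤ)-1-((5*j+3 : ℕ):ℤ) = (r:ℤ)-(5*(j:ℤ)+3)-1 := by push_cast; ring
    rw [a1, a2, a3, a4]
    ring
  -- step 7-8 : pair and shrink
  have step4 : ∑ j ∈ Finset.range (r+1), (T (2*j) + T (2*j+1)) = ∑ m ∈ Finset.range (r+1), T m := by
    rw [← pair_sum T (r+1)]
    refine (Finset.sum_subset (Finset.range_subset_range.2 (by omega)) fun m _ hm => ?_).symm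
    rw [Finset.mem_range, not_lt] at hm
    have hoff : (r:ℤ) - offset m < 0 := by
      unfold offset
      rcases Nat.even_or_odd m with ⟨t, ht⟩ | ⟨t, ht⟩ <;> subst ht
      · rw [if_pos (by omega : (t+t) % 2 = 0)]
        push_cast
        omega
      · rw [if_neg (by omega : ¬ (2*t+1) % 2 = 0)]
        push_cast
        omega
    simp only [hT]
    rw [c_neg hoff]
    ring
  rw [step1, step2, step3, step4]
end

section
/- Let p ≥ 3 be a prime and let g = p. In Λ²(F_p^{2p}) with symplectic form ω = Σ_{i=1}^p a_i ∧ b_i, the vector v = ω - p·(a_1 ∧ b_1) = ω (mod p) satisfies F(v) = 0 (where F is the mod-p reduction of the adjoint of wedging with ω), and v is orthogonal to every element w of ker(F) ∩ Λ² with respect to the induced F_p-valued inner form: ⟨v, w⟩ = 0 for all such w. Hence the inner form on ker(F) ∩ Λ²(F_p^{2p}) is degenerate. -/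
/-!
STATEMENT 3.  Let p ≥ 3 be prime and g = p.  We work with the coordinate
model of Λ*(F_p^{2p}) as functions `Finset (Fin (2p)) → ZMod p` in the
monomial basis of the symplectic basis a_1,…,a_p,b_1,…,b_p (a_i ↦ index 2i,
b_i ↦ 2i+1).  `Fop` is the mod-p reduction of the adjoint of wedging with
ω = Σ a_i ∧ b_i (adjoint for the inner product `innerF` with orthonormal
monomial basis), `Ldeg 2` is Λ².  The vector v = ω - p·(a_1∧b_1) = ω (mod p)
has coordinates 1 exactly on the sets {a_i, b_i}.

Claim: F(v) = 0, v ∈ Λ², v ≠ 0, and ⟨v,w⟩ = 0 for every w ∈ ker F ∩ Λ²;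
hence the inner form on ker F ∩ Λ²(F_p^{2p}) is degenerate.
-/

def ai (g : ℕ) (i : Fin g) : Fin (2 * g) := ⟨2 * i, by omega⟩
def bi (g : ℕ) (i : Fin g) : Fin (2 * g) := ⟨2 * i + 1, by omega⟩

abbrev Lam (R : Type) (g : ℕ) := Finset (Fin (2 * g)) → R

def Eop (R : Type) [CommRing R] (g : ℕ) : Lam R g →ₗ[R] Lam R g where
  toFun f S := ∑ i ∈ Finset.univ.filter (fun i : Fin g => ai g i ∈ S ∧ bi g i ∈ S),
      f (S \ {ai g i, bi g i})
  map_add' f h := by funext S; simp [Finset.sum_add_distrib]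
  map_smul' c f := by funext S; simp [Finset.mul_sum]

def Fop (R : Type) [CommRing R] (g : ℕ) : Lam R g →ₗ[R] Lam R g where
  toFun f S := ∑ i ∈ Finset.univ.filter (fun i : Fin g => ai g i ∉ S ∧ bi g i ∉ S),
      f (insert (ai g i) (insert (bi g i) S))
  map_add' f h := by funext S; simp [Finset.sum_add_distrib]
  map_smul' c f := by funext S; simp [Finset.mul_sum]

def Ldeg (R : Type) [CommRing R] (g j : ℕ) : Submodule R (Lam R g) where
  carrier := {f | ∀ S, S.card ≠ j → f S = 0}
  add_mem' := by intro a b ha hb S hS; simp [Pi.add_apply, ha S hS, hb S hS]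
  zero_mem' := by intro S _; rfl
  smul_mem' := by intro c f hf S hS; simp [Pi.smul_apply, hf S hS]

def innerF (R : Type) [CommRing R] (g : ℕ) (f f' : Lam R g) : R :=
  ∑ S : Finset (Fin (2 * g)), f S * f' S


lemma ai_ne_bi (g : ℕ) (i j : Fin g) : ai g i ≠ bi g j := by
  simp only [ai, bi, Ne, Fin.mk.injEq]; omega

lemma pair_card (p : ℕ) (i : Fin p) : ({ai p i, bi p i} : Finset (Fin (2*p))).card = 2 := by
  rw [Finset.card_insert_of_notMem (by simp [ai_ne_bi]), Finset.card_singleton]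

lemma pair_inj (p : ℕ) (i j : Fin p)
    (h : ({ai p i, bi p i} : Finset (Fin (2*p))) = {ai p j, bi p j}) : i = j := by
  have : ai p i ∈ ({ai p j, bi p j} : Finset (Fin (2*p))) := by
    rw [← h]; simp
  simp only [Finset.mem_insert, Finset.mem_singleton, ai, bi, Fin.mk.injEq] at this
  exact Fin.ext (by omega)

/-- the mod-p reduction v of ω = Σ a_i ∧ b_i in Λ²(F_p^{2p}) -/
def omegaModP (p : ℕ) : Lam (ZMod p) p :=
  fun S => if ∃ i : Fin p, S = {ai p i, bi p i} then 1 else 0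

theorem inner_form_degenerate_mod_p (p : ℕ) (hp : p.Prime) (hp3 : 3 ≤ p) :
    Fop (ZMod p) p (omegaModP p) = 0 ∧
    omegaModP p ∈ Ldeg (ZMod p) p 2 ∧
    omegaModP p ≠ 0 ∧
    (∀ w : Lam (ZMod p) p, Fop (ZMod p) p w = 0 → w ∈ Ldeg (ZMod p) p 2 →
      innerF (ZMod p) p (omegaModP p) w = 0) := by
  have hv2 : omegaModP p ∈ Ldeg (ZMod p) p 2 := by
    intro S hS
    simp only [omegaModP, ite_eq_right_iff]
    rintro ⟨i, rfl⟩
    exact absurd (pair_card p i) hS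
  have hF : Fop (ZMod p) p (omegaModP p) = 0 := by
    funext S
    show (∑ i ∈ Finset.univ.filter (fun i : Fin p => ai p i ∉ S ∧ bi p i ∉ S),
        omegaModP p (insert (ai p i) (insert (bi p i) S))) = 0
    rcases eq_or_ne S ∅ with rfl | hS
    · have : ∀ i : Fin p, omegaModP p (insert (ai p i) (insert (bi p i) (∅ : Finset (Fin (2*p))))) = 1 := by
        intro i
        show (if ∃ j : Fin p, insert (ai p i) (insert (bi p i) (∅ : Finset (Fin (2*p)))) = {ai p j, bi p j} then (1:ZMod p) else 0) = 1
        rw [if_pos]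
        exact ⟨i, rfl⟩
      rw [Finset.filter_true_of_mem (fun i _ => by simp)]
      rw [Finset.sum_congr rfl (fun i _ => this i)]
      simp [Finset.card_univ, ZMod.natCast_self]
    · apply Finset.sum_eq_zero
      intro i hi
      simp only [Finset.mem_filter] at hi
      apply hv2
      rw [Finset.card_insert_of_notMem (by simp [ai_ne_bi, hi.2.1]),
        Finset.card_insert_of_notMem hi.2.2]
      have : S.card ≠ 0 := by simpa [Finset.card_eq_zero] using hS
      omega
  refine ⟨hF, hv2, ?_, ?_⟩
  · intro h
    haveI : Fact (1 < p) := ⟨by omega⟩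
    have i0 : Fin p := ⟨0, by omega⟩
    have h1 : omegaModP p ({ai p i0, bi p i0} : Finset (Fin (2*p))) = 1 := by
      show (if ∃ j : Fin p, ({ai p i0, bi p i0} : Finset (Fin (2*p))) = {ai p j, bi p j} then (1:ZMod p) else 0) = 1
      rw [if_pos]
      exact ⟨i0, rfl⟩
    rw [h] at h1
    exact one_ne_zero (α := ZMod p) h1.symm
  · intro w hw hw2
    have key : (∑ i : Fin p, w {ai p i, bi p i}) = 0 := by
      have := congrFun hw ∅
      simpa [Fop, Finset.filter_true_of_mem (fun (i : Fin p) (_ : i ∈ Finset.univ) =>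
        show ai p i ∉ (∅:Finset (Fin (2*p))) ∧ bi p i ∉ (∅:Finset (Fin (2*p))) by simp)] using this
    rw [innerF]
    rw [← Finset.sum_filter_add_sum_filter_not Finset.univ
      (fun S => ∃ i : Fin p, S = {ai p i, bi p i})]
    have h2 : ∑ S ∈ Finset.univ.filter (fun S => ¬ ∃ i : Fin p, S = {ai p i, bi p i}),
        omegaModP p S * w S = 0 := by
      apply Finset.sum_eq_zero
      intro S hS
      simp only [Finset.mem_filter] at hS
      rw [omegaModP, if_neg hS.2, zero_mul]
    rw [h2, add_zero]
    have h1 : ∑ S ∈ Finset.univ.filter (fun S => ∃ i : Fin p, S = {ai p i, bi p i}),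
        omegaModP p S * w S = ∑ i : Fin p, w {ai p i, bi p i} := by
      rw [Finset.sum_congr rfl (fun S hS => by
        simp only [Finset.mem_filter] at hS
        rw [omegaModP, if_pos hS.2, one_mul])]
      have himg : Finset.univ.filter (fun S => ∃ i : Fin p, S = {ai p i, bi p i})
          = Finset.univ.image (fun i : Fin p => ({ai p i, bi p i} : Finset (Fin (2*p)))) := by
        ext S
        simp only [Finset.mem_filter, Finset.mem_image, Finset.mem_univ, true_and]
        constructor
        · rintro ⟨i, rfl⟩; exact ⟨i, rfl⟩
        · rintro ⟨i, rfl⟩; exact ⟨i, rfl⟩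
      rw [himg, Finset.sum_image (fun i _ j _ h => pair_inj p i j h)]
    rw [h1, key]
end

section
/- Let p be an odd prime and E the operator of wedging with ω on Λ*(Z^{2g}) (g arbitrary, ω the standard symplectic 2-form). If j ≡ k mod p with 0 < k < p, then E^k maps the integral primitive subspace of the j-th Lefschetz component into the sum of the primitive subspace of the (j-2k)-th component and p·Λ*(Z^{2g}); consequently E^k induces a well-defined map between the mod-p reductions of these subspaces. Moreover E^p ≡ 0 mod p as an operator from ker(F)∩Λ^{g-j+1} when j is the weight, i.e., E^p maps primitive vectors into p·Λ*(Z^{2g}). -/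
/-! ### Auxiliary theory -/

namespace CubeX
open Finset
open scoped symmDiff
variable {ι : Type} [DecidableEq ι]

/-- shadow sum over all supersets of `G` inside `U`. -/
def sh (U : Finset ι) (w : Finset ι → ℤ) (G : Finset ι) : ℤ :=
  ∑ T ∈ (U \ G).powerset, w (G ∪ T)

/-- rank support -/
def RS (U : Finset ι) (r : ℕ) (w : Finset ι → ℤ) : Prop :=
  ∀ B, w B ≠ 0 → B ⊆ U ∧ B.card = r

lemma sh_add (U : Finset ι) (w w' : Finset ι → ℤ) (G : Finset ι) :
    sh U (fun B => w B + w' B) G = sh U w G + sh U w' G := by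
  simp [sh, Finset.sum_add_distrib]

lemma sh_smul (U : Finset ι) (c : ℤ) (w : Finset ι → ℤ) (G : Finset ι) :
    sh U (fun B => c * w B) G = c * sh U w G := by
  simp [sh, Finset.mul_sum]

/-- elements of a matching -/
def melems (M : Finset (ι × ι)) : Finset ι := M.biUnion (fun z => {z.1, z.2})

lemma mem_melems {M : Finset (ι × ι)} {x : ι} :
    x ∈ melems M ↔ ∃ z ∈ M, x = z.1 ∨ x = z.2 := by
  simp [melems]

/-- a valid (partial) matching on `U` -/
def Valid (U : Finset ι) (M : Finset (ι × ι)) : Prop :=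
  (∀ z ∈ M, z.1 ∈ U ∧ z.2 ∈ U ∧ z.1 ≠ z.2) ∧
  (∀ z ∈ M, ∀ z' ∈ M, z ≠ z' →
    z.1 ≠ z'.1 ∧ z.1 ≠ z'.2 ∧ z.2 ≠ z'.1 ∧ z.2 ≠ z'.2)

def chi (z : ι × ι) (B : Finset ι) : ℤ :=
  if z.1 ∈ B ∧ z.2 ∉ B then 1 else if z.2 ∈ B ∧ z.1 ∉ B then -1 else 0

/-- polytabloid -/
def ptab (M : Finset (ι × ι)) (B : Finset ι) : ℤ :=
  if B ⊆ melems M then ∏ z ∈ M, chi z B else 0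

def PT (U : Finset ι) (r : ℕ) : Set (Finset ι → ℤ) :=
  { w | ∃ M, Valid U M ∧ M.card = r ∧ w = ptab M }

lemma valid_pairdisj {U : Finset ι} {M : Finset (ι × ι)} (hv : Valid U M) :
    ∀ z ∈ M, ∀ z' ∈ M, z ≠ z' →
      Disjoint ({z.1, z.2} : Finset ι) ({z'.1, z'.2} : Finset ι) := by
  intro z hz z' hz' hne
  obtain ⟨h1, h2, h3, h4⟩ := hv.2 z hz z' hz' hne
  simp [Finset.disjoint_left]
  aesop

lemma melems_card {U : Finset ι} {M : Finset (ι × ι)} (hv : Valid U M) :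
    (melems M).card = 2 * M.card := by
  rw [melems, Finset.card_biUnion]
  · rw [Finset.sum_congr rfl (g := fun _ => 2)]
    · simp [Finset.sum_const, Nat.mul_comm]
    · intro z hz
      rw [Finset.card_insert_of_notMem (by simp [(hv.1 z hz).2.2]), Finset.card_singleton]
  · intro z hz z' hz' hne
    exact valid_pairdisj hv z hz z' hz' hne

lemma melems_subset {U : Finset ι} {M : Finset (ι × ι)} (hv : Valid U M) :
    melems M ⊆ U := by
  intro x hx
  rcases mem_melems.1 hx with ⟨z, hz, h | h⟩ <;> subst h
  · exact (hv.1 z hz).1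
  · exact (hv.1 z hz).2.1

lemma chi_ne_zero {z : ι × ι} {B : Finset ι} (h : chi z B ≠ 0) :
    (z.1 ∈ B ∧ z.2 ∉ B) ∨ (z.2 ∈ B ∧ z.1 ∉ B) := by
  by_contra hc
  push_neg at hc
  simp only [chi] at h
  aesop

/-- rank support for polytabloids -/
lemma ptab_RS {U : Finset ι} {M : Finset (ι × ι)} (hv : Valid U M) :
    RS U M.card (ptab M) := by
  intro B hB
  rw [ptab] at hB
  by_cases hsub : B ⊆ melems M
  · rw [if_pos hsub] at hB
    refine ⟨hsub.trans (melems_subset hv), ?_⟩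
    -- B = ⋃ z, (B ∩ {z.1,z.2}), each of card 1
    have hBeq : B = M.biUnion (fun z => B ∩ {z.1, z.2}) := by
      ext x
      simp only [Finset.mem_biUnion, Finset.mem_inter]
      constructor
      · intro hx
        rcases mem_melems.1 (hsub hx) with ⟨z, hz, h⟩
        exact ⟨z, hz, hx, by simp [Finset.mem_insert]; tauto⟩
      · rintro ⟨z, hz, hx, -⟩; exact hx
    have hcard : ∀ z ∈ M, (B ∩ ({z.1, z.2} : Finset ι)).card = 1 := by
      intro z hz
      have hch : chi z B ≠ 0 := by
        intro h0
        exact hB (Finset.prod_eq_zero hz h0)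
      rcases chi_ne_zero hch with ⟨h1, h2⟩ | ⟨h1, h2⟩
      · rw [show B ∩ ({z.1, z.2} : Finset ι) = {z.1} by
          ext x; simp only [Finset.mem_inter, Finset.mem_insert, Finset.mem_singleton]
          constructor
          · rintro ⟨hx, rfl | rfl⟩
            · rfl
            · exact absurd hx h2
          · rintro rfl; exact ⟨h1, Or.inl rfl⟩]
        simp
      · rw [show B ∩ ({z.1, z.2} : Finset ι) = {z.2} by
          ext x; simp only [Finset.mem_inter, Finset.mem_insert, Finset.mem_singleton]
          constructor
          · rintro ⟨hx, rfl | rfl⟩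
            · exact absurd hx h2
            · rfl
          · rintro rfl; exact ⟨h1, Or.inr rfl⟩]
        simp
    rw [hBeq, Finset.card_biUnion]
    · rw [Finset.sum_congr rfl hcard]; simp
    · intro z hz z' hz' hne
      exact Finset.disjoint_of_subset_left (Finset.inter_subset_right)
        (Finset.disjoint_of_subset_right (Finset.inter_subset_right)
          (valid_pairdisj hv z hz z' hz' hne))
  · rw [if_neg hsub] at hB; exact absurd rfl hB

lemma chi_congr {z : ι × ι} {B B' : Finset ι}
    (h1 : z.1 ∈ B ↔ z.1 ∈ B') (h2 : z.2 ∈ B ↔ z.2 ∈ B') : chi z B = chi z B' := by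
  simp only [chi, h1, h2]

/-- key toggle identity -/
lemma ptab_toggle {U : Finset ι} {M : Finset (ι × ι)} (hv : Valid U M)
    {z₀ : ι × ι} (hz₀ : z₀ ∈ M) (B : Finset ι) :
    ptab M B + ptab M (B ∆ ({z₀.1, z₀.2} : Finset ι)) = 0 := by
  have hne : z₀.1 ≠ z₀.2 := (hv.1 z₀ hz₀).2.2
  have hmem1 : z₀.1 ∈ melems M := mem_melems.2 ⟨z₀, hz₀, Or.inl rfl⟩
  have hmem2 : z₀.2 ∈ melems M := mem_melems.2 ⟨z₀, hz₀, Or.inr rfl⟩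
  have hsub_iff : B ⊆ melems M ↔ (B ∆ ({z₀.1, z₀.2} : Finset ι)) ⊆ melems M := by
    constructor
    · intro h x hx
      rw [Finset.mem_symmDiff] at hx
      rcases hx with ⟨hx, -⟩ | ⟨hx, -⟩
      · exact h hx
      · simp only [Finset.mem_insert, Finset.mem_singleton] at hx
        rcases hx with rfl | rfl <;> assumption
    · intro h x hx
      by_cases hxp : x ∈ ({z₀.1, z₀.2} : Finset ι)
      · simp only [Finset.mem_insert, Finset.mem_singleton] at hxp
        rcases hxp with rfl | rfl <;> assumption
      · exact h (Finset.mem_symmDiff.2 (Or.inl ⟨hx, hxp⟩))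
  have hmem_toggle : ∀ x : ι, x ∈ ({z₀.1, z₀.2} : Finset ι) →
      (x ∈ B ∆ ({z₀.1, z₀.2} : Finset ι) ↔ x ∉ B) := by
    intro x hx
    rw [Finset.mem_symmDiff]
    constructor
    · rintro (⟨-, h⟩ | ⟨-, h⟩)
      · exact absurd hx h
      · exact h
    · intro h; exact Or.inr ⟨hx, h⟩
  have hmem_keep : ∀ x : ι, x ∉ ({z₀.1, z₀.2} : Finset ι) →
      (x ∈ B ∆ ({z₀.1, z₀.2} : Finset ι) ↔ x ∈ B) := by
    intro x hx
    rw [Finset.mem_symmDiff]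
    constructor
    · rintro (⟨h, -⟩ | ⟨h, -⟩)
      · exact h
      · exact absurd h hx
    · intro h; exact Or.inl ⟨h, hx⟩
  have h1t := hmem_toggle z₀.1 (by simp)
  have h2t := hmem_toggle z₀.2 (by simp)
  by_cases hsub : B ⊆ melems M
  · rw [ptab, ptab, if_pos hsub, if_pos (hsub_iff.1 hsub)]
    have hcong : ∀ z ∈ M.erase z₀, chi z (B ∆ ({z₀.1, z₀.2} : Finset ι)) = chi z B := by
      intro z hz
      obtain ⟨hzne, hzM⟩ := Finset.mem_erase.1 hz
      obtain ⟨d1, d2, d3, d4⟩ := hv.2 z hzM z₀ hz₀ hzne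
      exact chi_congr
        (hmem_keep z.1 (by simp [d1, d2]))
        (hmem_keep z.2 (by simp [d3, d4]))
    rw [← Finset.mul_prod_erase M _ hz₀, ← Finset.mul_prod_erase M _ hz₀,
      Finset.prod_congr rfl hcong]
    have : chi z₀ B + chi z₀ (B ∆ ({z₀.1, z₀.2} : Finset ι)) = 0 := by
      by_cases hb1 : z₀.1 ∈ B <;> by_cases hb2 : z₀.2 ∈ B <;>
        simp [chi, hb1, hb2, h1t.2, h2t.2, (h1t.1), (h2t.1)] <;> aesop
    ring_nf
    linear_combination (∏ z ∈ M.erase z₀, chi z B) * this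
  · rw [ptab, ptab, if_neg hsub, if_neg (fun h => hsub (hsub_iff.2 h))]
    ring


/-! new content -/

/-- find a pair untouched by a small set -/
lemma exists_untouched {U : Finset ι} {M : Finset (ι × ι)} (hv : Valid U M)
    {G : Finset ι} (hcard : G.card < M.card) :
    ∃ z ∈ M, z.1 ∉ G ∧ z.2 ∉ G := by
  by_contra hc
  push_neg at hc
  have h1 : ∀ z ∈ M, 1 ≤ (({z.1, z.2} : Finset ι) ∩ G).card := by
    intro z hz
    rcases Classical.em (z.1 ∈ G) with h | h
    · exact Finset.card_pos.2 ⟨z.1, by simp [h]⟩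
    · exact Finset.card_pos.2 ⟨z.2, by simp [hc z hz h]⟩
  have hdisj : ∀ z ∈ M, ∀ z' ∈ M, z ≠ z' →
      Disjoint (({z.1, z.2} : Finset ι) ∩ G) (({z'.1, z'.2} : Finset ι) ∩ G) :=
    fun z hz z' hz' hne => Finset.disjoint_of_subset_left Finset.inter_subset_left
      (Finset.disjoint_of_subset_right Finset.inter_subset_left
        (valid_pairdisj hv z hz z' hz' hne))
  have hle : M.card ≤ (M.biUnion (fun z => ({z.1, z.2} : Finset ι) ∩ G)).card := by
    rw [Finset.card_biUnion hdisj]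
    calc M.card = ∑ _z ∈ M, 1 := by simp
    _ ≤ _ := Finset.sum_le_sum h1
  have hsub : (M.biUnion (fun z => ({z.1, z.2} : Finset ι) ∩ G)) ⊆ G := by
    intro x hx
    simp only [Finset.mem_biUnion, Finset.mem_inter] at hx
    obtain ⟨z, -, -, h⟩ := hx
    exact h
  exact absurd ((hle.trans (Finset.card_le_card hsub))) (Nat.not_le.2 hcard)

/-- shadows of polytabloids vanish -/
lemma ptab_sh {U : Finset ι} {M : Finset (ι × ι)} (hv : Valid U M)
    {G : Finset ι} (hG : G ⊆ U) (hcard : G.card < M.card) :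
    sh U (ptab M) G = 0 := by
  obtain ⟨z₀, hz₀, hg1, hg2⟩ := exists_untouched hv hcard
  have hz1U : z₀.1 ∈ U := (hv.1 z₀ hz₀).1
  have hz2U : z₀.2 ∈ U := (hv.1 z₀ hz₀).2.1
  have hpair : ({z₀.1, z₀.2} : Finset ι) ⊆ U \ G := by
    intro x hx
    simp only [Finset.mem_insert, Finset.mem_singleton] at hx
    rcases hx with rfl | rfl <;> simp [Finset.mem_sdiff, *]
  refine Finset.sum_involution
    (fun T _ => T ∆ ({z₀.1, z₀.2} : Finset ι)) ?_ ?_ ?_ ?_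
  · intro T hT
    have hunion : G ∪ (T ∆ ({z₀.1, z₀.2} : Finset ι))
        = (G ∪ T) ∆ ({z₀.1, z₀.2} : Finset ι) := by
      ext x
      by_cases hx : x ∈ ({z₀.1, z₀.2} : Finset ι)
      · have hxG : x ∉ G := by
          simp only [Finset.mem_insert, Finset.mem_singleton] at hx
          rcases hx with rfl | rfl <;> assumption
        simp only [Finset.mem_union, Finset.mem_symmDiff, Finset.mem_union]
        tauto
      · simp only [Finset.mem_union, Finset.mem_symmDiff, Finset.mem_union]
        tauto
    rw [hunion]
    exact ptab_toggle hv hz₀ (G ∪ T)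
  · intro T hT _
    intro heq
    have h1 : z₀.1 ∈ T ∆ ({z₀.1, z₀.2} : Finset ι) ↔ z₀.1 ∉ T := by
      rw [Finset.mem_symmDiff]
      constructor
      · rintro (⟨-, h⟩ | ⟨-, h⟩)
        · exact absurd (by simp : z₀.1 ∈ ({z₀.1, z₀.2} : Finset ι)) h
        · exact h
      · intro h; exact Or.inr ⟨by simp, h⟩
    rw [heq] at h1
    tauto
  · intro T hT
    rw [Finset.mem_powerset] at hT ⊢
    intro x hx
    rw [Finset.mem_symmDiff] at hx
    rcases hx with ⟨h, -⟩ | ⟨h, -⟩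
    · exact hT h
    · exact hpair h
  · intro T _
    exact symmDiff_symmDiff_cancel_right _ _

/-- span elements are rank-supported -/
lemma span_RS {U : Finset ι} {r : ℕ} {u : Finset ι → ℤ}
    (hu : u ∈ Submodule.span ℤ (PT U r)) :
    ∀ B, ¬(B ⊆ U ∧ B.card = r) → u B = 0 := by
  induction hu using Submodule.span_induction with
  | mem x hx =>
    obtain ⟨M, hv, hMc, rfl⟩ := hx
    intro B hB
    by_contra h0
    exact hB ⟨(ptab_RS hv B h0).1, by rw [(ptab_RS hv B h0).2, hMc]⟩
  | zero => intro B _; rfl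
  | add x y hx hy ihx ihy => intro B hB; simp [Pi.add_apply, ihx B hB, ihy B hB]
  | smul c x hx ihx => intro B hB; simp [Pi.smul_apply, ihx B hB]

/-- shadows of span elements vanish -/
lemma span_sh {U : Finset ι} {r : ℕ} {u : Finset ι → ℤ}
    (hu : u ∈ Submodule.span ℤ (PT U r)) :
    ∀ G, G ⊆ U → G.card < r → sh U u G = 0 := by
  induction hu using Submodule.span_induction with
  | mem x hx =>
    obtain ⟨M, hv, hMc, rfl⟩ := hx
    intro G hG hc
    exact ptab_sh hv hG (by rw [hMc]; exact hc)
  | zero => intro G _ _; simp [sh]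
  | add x y hx hy ihx ihy =>
    intro G hG hc
    have : sh U (x + y) G = sh U x G + sh U y G := by
      simp [sh, Finset.sum_add_distrib]
    rw [this, ihx G hG hc, ihy G hG hc]; ring
  | smul c x hx ihx =>
    intro G hG hc
    have : sh U (c • x) G = c * sh U x G := by
      simp [sh, Finset.mul_sum]
    rw [this, ihx G hG hc]; ring

/-- adjacent shadows of span elements vanish -/
lemma span_ash {U : Finset ι} {r : ℕ} {u : Finset ι → ℤ}
    (hu : u ∈ Submodule.span ℤ (PT U r)) :
    ∀ B, ∑ i ∈ U \ B, u (insert i B) = 0 := by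
  intro B
  by_cases hB : B ⊆ U ∧ B.card + 1 = r
  · have hsh : sh U u B = ∑ i ∈ U \ B, u (insert i B) := by
      rw [sh]
      rw [← Finset.sum_subset (s₁ := (U \ B).powersetCard 1)
        (fun t ht => by
          simp only [Finset.mem_powersetCard] at ht
          exact Finset.mem_powerset.2 ht.1)
        (fun T hT hT1 => by
          apply span_RS hu
          rw [Finset.mem_powerset] at hT
          intro ⟨hsub, hcard⟩
          have hdisj : Disjoint B T :=
            Finset.disjoint_of_subset_right hT Finset.sdiff_disjoint.symm
          rw [Finset.card_union_of_disjoint hdisj] at hcard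
          apply hT1
          rw [Finset.mem_powersetCard]
          exact ⟨hT, by omega⟩)]
      rw [Finset.powersetCard_one, Finset.sum_map]
      apply Finset.sum_congr rfl
      intro i _
      congr 1
      ext x; simp [or_comm]
    rw [← hsh]
    exact span_sh hu B hB.1 (by omega)
  · apply Finset.sum_eq_zero
    intro i hi
    rw [Finset.mem_sdiff] at hi
    apply span_RS hu
    intro ⟨hsub, hcard⟩
    rw [Finset.card_insert_of_notMem hi.2] at hcard
    exact hB ⟨(Finset.insert_subset_iff.1 hsub).2, hcard⟩

lemma PT_mono {U U' : Finset ι} {r : ℕ} (h : U' ⊆ U) : PT U' r ⊆ PT U r := by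
  rintro w ⟨M, hv, hc, rfl⟩
  exact ⟨M, ⟨fun z hz => ⟨h (hv.1 z hz).1, h (hv.1 z hz).2.1, (hv.1 z hz).2.2⟩, hv.2⟩, hc, rfl⟩


/-! restriction operators -/
def res0 (m : ι) (w : Finset ι → ℤ) : Finset ι → ℤ :=
  fun B => if m ∈ B then 0 else w B
def res1 (m : ι) (w : Finset ι → ℤ) : Finset ι → ℤ :=
  fun B => if m ∈ B then 0 else w (insert m B)

lemma res0_RS {U : Finset ι} {r : ℕ} {w : Finset ι → ℤ} (m : ι) (hrs : RS U r w) :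
    RS (U.erase m) r (res0 m w) := by
  intro B hB
  rw [res0] at hB
  by_cases hm : m ∈ B
  · rw [if_pos hm] at hB; exact absurd rfl hB
  · rw [if_neg hm] at hB
    obtain ⟨h1, h2⟩ := hrs B hB
    exact ⟨Finset.subset_erase.2 ⟨h1, hm⟩, h2⟩

lemma res1_RS {U : Finset ι} {r : ℕ} {w : Finset ι → ℤ} {m : ι} (hm : m ∈ U)
    (hrs : RS U r w) : RS (U.erase m) (r - 1) (res1 m w) := by
  intro B hB
  rw [res1] at hB
  by_cases hmB : m ∈ B
  · rw [if_pos hmB] at hB; exact absurd rfl hB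
  · rw [if_neg hmB] at hB
    obtain ⟨h1, h2⟩ := hrs _ hB
    rw [Finset.card_insert_of_notMem hmB] at h2
    constructor
    · rw [Finset.subset_erase]
      refine ⟨fun x hx => h1 (Finset.mem_insert_of_mem hx), hmB⟩
    · omega

lemma sdiff_ins {U G : Finset ι} {m : ι} (hm : m ∈ U) (hG : G ⊆ U.erase m) :
    U \ G = insert m ((U.erase m) \ G) := by
  have hmG : m ∉ G := fun h => (Finset.mem_erase.1 (hG h)).1 rfl
  ext x
  simp only [Finset.mem_sdiff, Finset.mem_insert, Finset.mem_erase]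
  constructor
  · rintro ⟨hxU, hxG⟩
    by_cases hxm : x = m
    · exact Or.inl hxm
    · exact Or.inr ⟨⟨hxm, hxU⟩, hxG⟩
  · rintro (rfl | ⟨⟨-, h⟩, hg⟩)
    · exact ⟨hm, hmG⟩
    · exact ⟨h, hg⟩

lemma sh_split {U : Finset ι} {w : Finset ι → ℤ} {m : ι} (hm : m ∈ U)
    {G : Finset ι} (hG : G ⊆ U.erase m) :
    sh U w G = sh (U.erase m) (res0 m w) G + sh (U.erase m) (res1 m w) G := by
  have hmG : m ∉ G := fun h => (Finset.mem_erase.1 (hG h)).1 rfl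
  have hmd : m ∉ (U.erase m) \ G := fun h =>
    (Finset.mem_erase.1 (Finset.mem_sdiff.1 h).1).1 rfl
  rw [sh, sdiff_ins hm hG, Finset.sum_powerset_insert hmd]
  congr 1
  · apply Finset.sum_congr rfl
    intro T hT
    rw [Finset.mem_powerset] at hT
    have hmT : m ∉ G ∪ T := by
      simp only [Finset.mem_union]
      rintro (h | h)
      · exact hmG h
      · exact hmd (hT h)
    simp [sh, res0, hmT]
  · apply Finset.sum_congr rfl
    intro T hT
    rw [Finset.mem_powerset] at hT
    have hmT : m ∉ G ∪ T := by
      simp only [Finset.mem_union]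
      rintro (h | h)
      · exact hmG h
      · exact hmd (hT h)
    rw [Finset.union_insert]
    simp [res1, hmT]

lemma sh_insert {U : Finset ι} {w : Finset ι → ℤ} {m : ι} (hm : m ∈ U)
    {G : Finset ι} (hG : G ⊆ U.erase m) :
    sh (U.erase m) (res1 m w) G = sh U w (insert m G) := by
  have hmG : m ∉ G := fun h => (Finset.mem_erase.1 (hG h)).1 rfl
  have hind : U \ insert m G = (U.erase m) \ G := by
    ext x
    simp only [Finset.mem_sdiff, Finset.mem_insert, Finset.mem_erase]
    constructor
    · rintro ⟨hxU, hx⟩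
      push_neg at hx
      exact ⟨⟨hx.1, hxU⟩, hx.2⟩
    · rintro ⟨⟨hxm, hxU⟩, hxG⟩
      exact ⟨hxU, by tauto⟩
  rw [sh, sh, hind]
  apply Finset.sum_congr rfl
  intro T hT
  rw [Finset.mem_powerset] at hT
  have hmT : m ∉ G ∪ T := by
    simp only [Finset.mem_union]
    rintro (h | h)
    · exact hmG h
    · exact (Finset.mem_erase.1 (Finset.mem_sdiff.1 (hT h)).1).1 rfl
  rw [Finset.insert_union]
  simp [res1, hmT]

lemma recomb {q : ℤ} {w : Finset ι → ℤ} {m : ι}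
    (h0 : ∀ B, q ∣ res0 m w B) (h1 : ∀ B, q ∣ res1 m w B) :
    ∀ B, q ∣ w B := by
  intro B
  by_cases hm : m ∈ B
  · have := h1 (B.erase m)
    rw [res1, if_neg (Finset.notMem_erase m B), Finset.insert_erase hm] at this
    exact this
  · have := h0 B
    rw [res0, if_neg hm] at this
    exact this

/-- The overflow theorem. -/
theorem OV (q : ℤ) (U : Finset ι) :
    ∀ (r N : ℕ) (w : Finset ι → ℤ), 1 ≤ N → RS U r w →
    U.card + N ≤ 2 * r →
    (∀ G, G ⊆ U → G.card + N ≤ r → q ∣ sh U w G) →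
    ∀ B, q ∣ w B := by
  induction U using Finset.strongInduction with
  | _ U ih =>
    intro r N w hN hrs hzone hsh
    rcases U.eq_empty_or_nonempty with rfl | ⟨m, hm⟩
    · intro B
      rcases Classical.em (w B = 0) with h | h
      · simp [h]
      · obtain ⟨h1, h2⟩ := hrs B h
        simp only [Finset.card_empty] at hzone
        rw [Finset.subset_empty.1 h1] at h2
        simp at h2
        omega
    · have hss : U.erase m ⊂ U := Finset.erase_ssubset hm
      have hUc : U.card = (U.erase m).card + 1 := by
        rw [Finset.card_erase_of_mem hm]
        have : 0 < U.card := Finset.card_pos.2 ⟨m, hm⟩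
        omega
      have hr1 : 1 ≤ r := by omega
      -- step 0 : res0 vanishes
      have step0 : ∀ B, q ∣ res0 m w B := by
        apply ih _ hss r (N + 1) (res0 m w) (by omega) (res0_RS m hrs) (by omega)
        intro G hG hc
        have e1 : sh (U.erase m) (res0 m w) G = sh U w G - sh U w (insert m G) := by
          rw [← sh_insert hm hG]
          have := sh_split (w := w) hm hG
          omega
        rw [e1]
        have hmG : m ∉ G := fun h => (Finset.mem_erase.1 (hG h)).1 rfl
        apply dvd_sub
        · exact hsh G (hG.trans (Finset.erase_subset m U)) (by omega)
        · apply hsh (insert m G) (Finset.insert_subset hm (hG.trans (Finset.erase_subset m U)))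
          rw [Finset.card_insert_of_notMem hmG]
          omega
      -- step 1 : res1 vanishes
      have step1 : ∀ B, q ∣ res1 m w B := by
        by_cases hz2 : U.card + N + 1 ≤ 2 * r
        · apply ih _ hss (r - 1) N (res1 m w) hN (res1_RS hm hrs) (by omega)
          intro G hG hc
          rw [sh_insert hm hG]
          have hmG : m ∉ G := fun h => (Finset.mem_erase.1 (hG h)).1 rfl
          apply hsh (insert m G) (Finset.insert_subset hm (hG.trans (Finset.erase_subset m U)))
          rw [Finset.card_insert_of_notMem hmG]
          omega
        · have hzeq : U.card + N = 2 * r := by omega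
          by_cases hN2 : 2 ≤ N
          · apply ih _ hss (r - 1) (N - 1) (res1 m w) (by omega) (res1_RS hm hrs) (by omega)
            intro G hG hc
            have e1 : sh (U.erase m) (res1 m w) G = sh U w G - sh (U.erase m) (res0 m w) G := by
              have := sh_split (w := w) hm hG
              omega
            rw [e1]
            apply dvd_sub
            · exact hsh G (hG.trans (Finset.erase_subset m U)) (by omega)
            · exact Finset.dvd_sum (fun T _ => step0 _)
          · -- N = 1 pointwise case
            have hN1 : N = 1 := by omega
            intro B
            rcases Classical.em (res1 m w B = 0) with h | h
            · simp [h]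
            obtain ⟨hBsub, hBcard⟩ := res1_RS hm hrs B h
            have hsh1 : sh (U.erase m) (res1 m w) B = res1 m w B := by
              rw [sh]
              rw [Finset.sum_eq_single_of_mem ∅ (Finset.empty_mem_powerset _)]
              · rw [Finset.union_empty]
              · intro T hT hT0
                rcases Classical.em (res1 m w (B ∪ T) = 0) with h' | h'
                · exact h'
                · exfalso
                  obtain ⟨-, hc⟩ := res1_RS hm hrs _ h'
                  rw [Finset.mem_powerset] at hT
                  have hdisj : Disjoint B T :=
                    Finset.disjoint_of_subset_right hT Finset.sdiff_disjoint.symm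
                  rw [Finset.card_union_of_disjoint hdisj] at hc
                  have : T.card = 0 := by omega
                  exact hT0 (Finset.card_eq_zero.1 this)
            have e1 : res1 m w B = sh U w B - sh (U.erase m) (res0 m w) B := by
              have := sh_split (w := w) hm hBsub
              omega
            rw [e1]
            apply dvd_sub
            · apply hsh B (hBsub.trans (Finset.erase_subset m U))
              omega
            · exact Finset.dvd_sum (fun T _ => step0 _)
      exact recomb step0 step1


/-! new content : lift and CS -/

lemma melems_insert (z : ι × ι) (M : Finset (ι × ι)) :
    melems (insert z M) = insert z.1 (insert z.2 (melems M)) := by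
  rw [melems, Finset.biUnion_insert, show ({z.1, z.2} : Finset ι) = insert z.1 {z.2} from rfl,
    Finset.insert_union]
  rfl

lemma lift_ptab {U' : Finset ι} {m : ι} (hm : m ∉ U') {r : ℕ} (hr : 1 ≤ r)
    (hcard : 2 * (r - 1) < U'.card)
    {M' : Finset (ι × ι)} (hv : Valid U' M') (hMc : M'.card = r - 1) :
    ∃ Ξ ∈ Submodule.span ℤ (PT (insert m U') r),
      ∀ B, m ∉ B → Ξ (insert m B) = - ptab M' B := by
  -- choose a free vertex q
  have hsub : melems M' ⊆ U' := melems_subset hv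
  have hlt : (melems M').card < U'.card := by
    rw [melems_card hv, hMc]; exact hcard
  have hne : (U' \ melems M').Nonempty := by
    rw [← Finset.card_pos, Finset.card_sdiff_of_subset hsub]
    omega
  obtain ⟨q, hq⟩ := hne
  rw [Finset.mem_sdiff] at hq
  obtain ⟨hqU, hqM⟩ := hq
  have hmM : m ∉ melems M' := fun h => hm (hsub h)
  have hqm : q ≠ m := fun h => hm (h ▸ hqU)
  -- the lifted matching
  set M : Finset (ι × ι) := insert (q, m) M' with hM
  have hnotin : (q, m) ∉ M' := fun h => hmM (mem_melems.2 ⟨(q, m), h, Or.inr rfl⟩)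
  have hvM : Valid (insert m U') M := by
    constructor
    · intro z hz
      rw [hM, Finset.mem_insert] at hz
      rcases hz with rfl | hz
      · exact ⟨Finset.mem_insert_of_mem hqU, Finset.mem_insert_self m U', hqm⟩
      · obtain ⟨h1, h2, h3⟩ := hv.1 z hz
        exact ⟨Finset.mem_insert_of_mem h1, Finset.mem_insert_of_mem h2, h3⟩
    · intro z hz z' hz' hne'
      rw [hM, Finset.mem_insert] at hz hz'
      have key : ∀ y ∈ M', q ≠ y.1 ∧ q ≠ y.2 ∧ m ≠ y.1 ∧ m ≠ y.2 := by
        intro y hy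
        have h1 : y.1 ∈ melems M' := mem_melems.2 ⟨y, hy, Or.inl rfl⟩
        have h2 : y.2 ∈ melems M' := mem_melems.2 ⟨y, hy, Or.inr rfl⟩
        exact ⟨fun h => hqM (h ▸ h1), fun h => hqM (h ▸ h2),
          fun h => hmM (h ▸ h1), fun h => hmM (h ▸ h2)⟩
      rcases hz with rfl | hz <;> rcases hz' with rfl | hz'
      · exact absurd rfl hne'
      · obtain ⟨k1, k2, k3, k4⟩ := key z' hz'
        exact ⟨k1, k2, k3, k4⟩
      · obtain ⟨k1, k2, k3, k4⟩ := key z hz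
        exact ⟨k1.symm, k3.symm, k2.symm, k4.symm⟩
      · exact hv.2 z hz z' hz' hne'
  have hMcard : M.card = r := by
    rw [hM, Finset.card_insert_of_notMem hnotin, hMc]
    omega
  refine ⟨ptab M, Submodule.subset_span ⟨M, hvM, hMcard, rfl⟩, ?_⟩
  intro B hmB
  have hmel : melems M = insert q (insert m (melems M')) := by
    rw [hM, melems_insert]
  by_cases hqB : q ∈ B
  · -- both sides vanish
    have hrhs : ptab M' B = 0 := by
      rw [ptab, if_neg (fun h => hqM (h hqB))]
    have hlhs : ptab M (insert m B) = 0 := by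
      rw [ptab]
      by_cases hsub2 : insert m B ⊆ melems M
      · rw [if_pos hsub2]
        apply Finset.prod_eq_zero (Finset.mem_insert_self (q, m) M')
        have h1 : q ∈ insert m B := Finset.mem_insert_of_mem hqB
        have h2 : m ∈ insert m B := Finset.mem_insert_self m B
        simp [chi, h1, h2]
      · rw [if_neg hsub2]
    rw [hlhs, hrhs]; ring
  · have hsub_iff : insert m B ⊆ melems M ↔ B ⊆ melems M' := by
      rw [hmel]
      constructor
      · intro h x hx
        have := h (Finset.mem_insert_of_mem hx)
        rw [Finset.mem_insert, Finset.mem_insert] at this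
        rcases this with rfl | rfl | h'
        · exact absurd hx hqB
        · exact absurd hx hmB
        · exact h'
      · intro h
        apply Finset.insert_subset
        · exact Finset.mem_insert_of_mem (Finset.mem_insert_self _ _)
        · exact fun x hx => Finset.mem_insert_of_mem
            (Finset.mem_insert_of_mem (h hx))
    by_cases hsub2 : B ⊆ melems M'
    · rw [ptab, ptab, if_pos (hsub_iff.2 hsub2), if_pos hsub2, hM,
        Finset.prod_insert hnotin]
      have hchiqm : chi (q, m) (insert m B) = -1 := by
        have h2 : m ∈ insert m B := Finset.mem_insert_self m B
        have h1 : q ∉ insert m B := by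
          rw [Finset.mem_insert]
          rintro (rfl | h)
          · exact hqm rfl
          · exact hqB h
        simp [chi, h1, h2]
      have hrest : ∀ z ∈ M', chi z (insert m B) = chi z B := by
        intro z hz
        have h1 : z.1 ∈ melems M' := mem_melems.2 ⟨z, hz, Or.inl rfl⟩
        have h2 : z.2 ∈ melems M' := mem_melems.2 ⟨z, hz, Or.inr rfl⟩
        apply chi_congr
        · rw [Finset.mem_insert]
          constructor
          · rintro (rfl | h)
            · exact absurd h1 hmM
            · exact h
          · exact Or.inr
        · rw [Finset.mem_insert]
          constructor
          · rintro (rfl | h)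
            · exact absurd h2 hmM
            · exact h
          · exact Or.inr
      rw [Finset.prod_congr rfl hrest, hchiqm]
      ring
    · rw [ptab, ptab, if_neg (fun h => hsub2 (hsub_iff.1 h)), if_neg hsub2]
      ring

/-- lift for span elements -/
lemma lift_span {U' : Finset ι} {m : ι} (hm : m ∉ U') {r : ℕ} (hr : 1 ≤ r)
    (hcard : 2 * (r - 1) < U'.card) {u₁ : Finset ι → ℤ}
    (hu₁ : u₁ ∈ Submodule.span ℤ (PT U' (r - 1))) :
    ∃ Ξ ∈ Submodule.span ℤ (PT (insert m U') r),
      ∀ B, m ∉ B → Ξ (insert m B) = - u₁ B := by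
  induction hu₁ using Submodule.span_induction with
  | mem x hx =>
    obtain ⟨M', hv, hMc, rfl⟩ := hx
    exact lift_ptab hm hr hcard hv hMc
  | zero =>
    exact ⟨0, Submodule.zero_mem _, fun B _ => by simp⟩
  | add x y hx hy ihx ihy =>
    obtain ⟨Ξx, hΞx, hx'⟩ := ihx
    obtain ⟨Ξy, hΞy, hy'⟩ := ihy
    refine ⟨Ξx + Ξy, Submodule.add_mem _ hΞx hΞy, fun B hB => ?_⟩
    simp only [Pi.add_apply, hx' B hB, hy' B hB]
    ring
  | smul c x hx ihx =>
    obtain ⟨Ξx, hΞx, hx'⟩ := ihx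
    refine ⟨c • Ξx, Submodule.smul_mem _ c hΞx, fun B hB => ?_⟩
    simp only [Pi.smul_apply, hx' B hB, smul_eq_mul]
    ring

/-- The straightening theorem. -/
theorem CS (q : ℤ) (U : Finset ι) :
    ∀ (r : ℕ) (w : Finset ι → ℤ), RS U r w → 2 * r ≤ U.card →
    (∀ G, G ⊆ U → G.card < r → q ∣ sh U w G) →
    ∃ u ∈ Submodule.span ℤ (PT U r), ∀ B, q ∣ w B - u B := by
  induction U using Finset.strongInduction with
  | _ U ih =>
    intro r w hrs hcard hsh
    match r with
    | 0 =>
      refine ⟨w ∅ • ptab (∅ : Finset (ι × ι)),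
        Submodule.smul_mem _ _ (Submodule.subset_span
          ⟨∅, ⟨by simp, by simp⟩, by simp, rfl⟩), ?_⟩
      intro B
      by_cases hB : B = ∅
      · subst hB
        simp [ptab, melems]
      · have h0 : w B = 0 := by
          by_contra h
          exact hB (Finset.card_eq_zero.1 (hrs B h).2)
        have h1 : ptab (∅ : Finset (ι × ι)) B = 0 := by
          rw [ptab, if_neg]
          intro h
          apply hB
          rw [melems] at h
          simpa using Finset.subset_empty.1 (by simpa using h)
        simp [h0, Pi.smul_apply, h1]
    | (r + 1) =>
      -- nonempty U
      have hUne : U.Nonempty := by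
        rw [← Finset.card_pos]; omega
      obtain ⟨m, hm⟩ := hUne
      have hUeq : insert m (U.erase m) = U := Finset.insert_erase hm
      have hss : U.erase m ⊂ U := Finset.erase_ssubset hm
      have hUc : U.card = (U.erase m).card + 1 := by
        rw [Finset.card_erase_of_mem hm]
        have : 0 < U.card := Finset.card_pos.2 ⟨m, hm⟩
        omega
      have hmU' : m ∉ U.erase m := Finset.notMem_erase m U
      -- straighten the m-part
      have hrs₁ : RS (U.erase m) r (res1 m w) := by
        have := res1_RS hm hrs
        simpa using this
      obtain ⟨u₁, hu₁span, hu₁cong⟩ := ih _ hss r (res1 m w) hrs₁ (by omega)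
        (by
          intro G hG hGc
          rw [sh_insert hm hG]
          have hmG : m ∉ G := fun h => (Finset.mem_erase.1 (hG h)).1 rfl
          apply hsh (insert m G)
            (Finset.insert_subset hm (hG.trans (Finset.erase_subset m U)))
          rw [Finset.card_insert_of_notMem hmG]
          omega)
      -- lift
      have hu₁span' : u₁ ∈ Submodule.span ℤ (PT (U.erase m) (r + 1 - 1)) := by
        simpa using hu₁span
      obtain ⟨Ξ, hΞspan, hΞ⟩ := lift_span hmU' (by omega) (by simp; omega) hu₁span'
      rw [hUeq] at hΞspan
      set w' : Finset ι → ℤ := fun B => w B + Ξ B with hw'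
      have c1 : ∀ B, m ∉ B → q ∣ w' (insert m B) := by
        intro B hB
        have e1 : w' (insert m B) = res1 m w B - u₁ B := by
          rw [hw']
          simp only
          rw [hΞ B hB, res1, if_neg hB]
          ring
        rw [e1]
        exact hu₁cong B
      have hrs' : RS U (r + 1) w' := by
        intro B hB
        rw [hw'] at hB
        simp only at hB
        by_cases h1 : w B = 0
        · rw [h1, zero_add] at hB
          by_contra hc
          exact hB (span_RS hΞspan B hc)
        · exact hrs B h1
      have hrs'₀ : RS (U.erase m) (r + 1) (res0 m w') := res0_RS m hrs'
      have hsh'₀ : ∀ G, G ⊆ U.erase m → G.card < r + 1 → q ∣ sh (U.erase m) (res0 m w') G := by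
        intro G hG hGc
        have e1 : sh (U.erase m) (res0 m w') G
            = sh U w' G - sh (U.erase m) (res1 m w') G := by
          have := sh_split (w := w') hm hG
          omega
        have e2 : sh U w' G = sh U w G + sh U Ξ G := by
          simp [sh, hw', Finset.sum_add_distrib]
        rw [e1, e2, span_sh hΞspan G (hG.trans (Finset.erase_subset m U)) hGc]
        have d1 : q ∣ sh U w G := hsh G (hG.trans (Finset.erase_subset m U)) hGc
        have d2 : q ∣ sh (U.erase m) (res1 m w') G := by
          apply Finset.dvd_sum
          intro T hT
          rw [res1]
          by_cases hmT : m ∈ G ∪ T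
          · rw [if_pos hmT]; exact dvd_zero q
          · rw [if_neg hmT]
            exact c1 _ hmT
        rw [add_zero]
        exact dvd_sub d1 d2
      -- straighten or kill the rest
      have hrest : ∃ u₀ ∈ Submodule.span ℤ (PT (U.erase m) (r + 1)),
          ∀ B, q ∣ res0 m w' B - u₀ B := by
        by_cases h2 : 2 * (r + 1) ≤ (U.erase m).card
        · exact ih _ hss (r + 1) (res0 m w') hrs'₀ h2 hsh'₀
        · refine ⟨0, Submodule.zero_mem _, ?_⟩
          intro B
          simp only [Pi.zero_apply, sub_zero]
          apply OV q (U.erase m) (r + 1) 1 (res0 m w') le_rfl hrs'₀ (by omega)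
          intro G hG hGc
          exact hsh'₀ G hG (by omega)
      obtain ⟨u₀, hu₀span, hu₀cong⟩ := hrest
      have hu₀span' : u₀ ∈ Submodule.span ℤ (PT U (r + 1)) :=
        Submodule.span_mono (PT_mono (Finset.erase_subset m U)) hu₀span
      refine ⟨u₀ - Ξ, Submodule.sub_mem _ hu₀span' hΞspan, ?_⟩
      intro B
      have key : w B - (u₀ - Ξ) B = w' B - u₀ B := by
        rw [hw']
        simp [Pi.sub_apply]
        ring
      rw [key]
      by_cases hmB : m ∈ B
      · have hu₀0 : u₀ B = 0 := by
          apply span_RS hu₀span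
          rintro ⟨hsub, -⟩
          exact (Finset.mem_erase.1 (hsub hmB)).1 rfl
        rw [hu₀0, sub_zero]
        have : w' B = w' (insert m (B.erase m)) := by
          rw [Finset.insert_erase hmB]
        rw [this]
        exact c1 _ (Finset.notMem_erase m B)
      · have : w' B = res0 m w' B := by rw [res0, if_neg hmB]
        rw [this]
        exact hu₀cong B


end CubeX

namespace PairX
open Finset
variable {g : ℕ}

def pr (i : Fin g) : Finset (Fin (2*g)) := {ai g i, bi g i}
def pidx (x : Fin (2*g)) : Fin g := ⟨x.val / 2, by omega⟩
def pfull (S : Finset (Fin (2*g))) : Finset (Fin g) :=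
  Finset.univ.filter (fun i => ai g i ∈ S ∧ bi g i ∈ S)
def pfree (S : Finset (Fin (2*g))) : Finset (Fin g) :=
  Finset.univ.filter (fun i => ai g i ∉ S ∧ bi g i ∉ S)
def elems (I : Finset (Fin g)) : Finset (Fin (2*g)) := I.biUnion pr

lemma ai_val (i : Fin g) : (ai g i).val = 2 * i.val := rfl
lemma bi_val (i : Fin g) : (bi g i).val = 2 * i.val + 1 := rfl
lemma pidx_ai (i : Fin g) : pidx (ai g i) = i := by
  apply Fin.ext
  show (2 * i.val) / 2 = i.val
  omega
lemma pidx_bi (i : Fin g) : pidx (bi g i) = i := by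
  apply Fin.ext
  show (2 * i.val + 1) / 2 = i.val
  omega
lemma ai_ne_bi (i l : Fin g) : ai g i ≠ bi g l := by
  intro h
  have := congrArg Fin.val h
  rw [ai_val, bi_val] at this
  omega

lemma mem_pr {x : Fin (2*g)} {i : Fin g} : x ∈ pr i ↔ pidx x = i := by
  constructor
  · intro h
    rcases Finset.mem_insert.1 h with rfl | h
    · exact pidx_ai i
    · rw [Finset.mem_singleton] at h
      subst h
      exact pidx_bi i
  · intro h
    have hx : x.val = 2 * i.val ∨ x.val = 2 * i.val + 1 := by
      have := congrArg Fin.val h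
      simp [pidx] at this
      omega
    rcases hx with hx | hx
    · exact Finset.mem_insert.2 (Or.inl (Fin.ext (by rw [hx, ai_val])))
    · refine Finset.mem_insert.2 (Or.inr (Finset.mem_singleton.2 (Fin.ext (by rw [hx, bi_val]))))

lemma mem_elems {x : Fin (2*g)} {I : Finset (Fin g)} : x ∈ elems I ↔ pidx x ∈ I := by
  simp only [elems, Finset.mem_biUnion]
  constructor
  · rintro ⟨i, hi, hx⟩
    rwa [mem_pr.1 hx]
  · intro h
    exact ⟨pidx x, h, mem_pr.2 rfl⟩

lemma mem_pfull {S : Finset (Fin (2*g))} {i : Fin g} :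
    i ∈ pfull S ↔ ai g i ∈ S ∧ bi g i ∈ S := by simp [pfull]
lemma mem_pfree {S : Finset (Fin (2*g))} {i : Fin g} :
    i ∈ pfree S ↔ ai g i ∉ S ∧ bi g i ∉ S := by simp [pfree]

lemma pr_subset_iff {S : Finset (Fin (2*g))} {i : Fin g} : pr i ⊆ S ↔ i ∈ pfull S := by
  rw [mem_pfull, pr]
  simp [Finset.insert_subset_iff]

lemma free_disj {S : Finset (Fin (2*g))} {i : Fin g} (h : i ∈ pfree S) :
    Disjoint (pr i) S := by
  rw [mem_pfree] at h
  rw [pr, Finset.disjoint_left]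
  intro x hx
  rcases Finset.mem_insert.1 hx with rfl | hx
  · exact h.1
  · rw [Finset.mem_singleton] at hx; subst hx; exact h.2

lemma mem_pr_self_a {i : Fin g} : ai g i ∈ pr i := Finset.mem_insert_self _ _
lemma mem_pr_self_b {i : Fin g} : bi g i ∈ pr i :=
  Finset.mem_insert_of_mem (Finset.mem_singleton_self _)

lemma pr_card (i : Fin g) : (pr i).card = 2 := by
  rw [pr, Finset.card_insert_of_notMem (by simp [ai_ne_bi]), Finset.card_singleton]

lemma pfull_union_pr {S : Finset (Fin (2*g))} {i : Fin g} (h : i ∈ pfree S) :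
    pfull (S ∪ pr i) = insert i (pfull S) := by
  ext l
  rw [mem_pfull, Finset.mem_insert, mem_pfull]
  by_cases hl : l = i
  · subst hl
    simp [Finset.mem_union, mem_pr_self_a, mem_pr_self_b]
  · have ha : ai g l ∉ pr i := fun hc => hl (by rw [← pidx_ai l, mem_pr.1 hc])
    have hb : bi g l ∉ pr i := fun hc => hl (by rw [← pidx_bi l, mem_pr.1 hc])
    simp only [Finset.mem_union]
    constructor
    · rintro ⟨h1 | h1, h2 | h2⟩
      · exact Or.inr ⟨h1, (by tauto)⟩
      · exact absurd h2 hb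
      · exact absurd h1 ha
      · exact absurd h1 ha
    · rintro (rfl | ⟨h1, h2⟩)
      · exact absurd rfl hl
      · exact ⟨Or.inl h1, Or.inl h2⟩

lemma pfree_union_pr {S : Finset (Fin (2*g))} {i : Fin g} (h : i ∈ pfree S) :
    pfree (S ∪ pr i) = (pfree S).erase i := by
  ext l
  rw [mem_pfree, Finset.mem_erase, mem_pfree]
  by_cases hl : l = i
  · subst hl
    simp [Finset.mem_union, mem_pr_self_a, mem_pr_self_b]
  · have ha : ai g l ∉ pr i := fun hc => hl (by rw [← pidx_ai l, mem_pr.1 hc])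
    have hb : bi g l ∉ pr i := fun hc => hl (by rw [← pidx_bi l, mem_pr.1 hc])
    simp only [Finset.mem_union]
    constructor
    · rintro ⟨h1, h2⟩
      push_neg at h1 h2
      exact ⟨hl, h1.1, h2.1⟩
    · rintro ⟨-, h1, h2⟩
      constructor
      · rintro (hc | hc)
        · exact h1 hc
        · exact ha hc
      · rintro (hc | hc)
        · exact h2 hc
        · exact hb hc

lemma pfull_sdiff_pr {S : Finset (Fin (2*g))} {i : Fin g} (h : i ∈ pfull S) :
    pfull (S \ pr i) = (pfull S).erase i := by
  ext l
  rw [mem_pfull, Finset.mem_erase, mem_pfull]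
  by_cases hl : l = i
  · subst hl
    simp [Finset.mem_sdiff, mem_pr_self_a, mem_pr_self_b]
  · have ha : ai g l ∉ pr i := fun hc => hl (by rw [← pidx_ai l, mem_pr.1 hc])
    have hb : bi g l ∉ pr i := fun hc => hl (by rw [← pidx_bi l, mem_pr.1 hc])
    simp only [Finset.mem_sdiff]
    constructor
    · rintro ⟨⟨h1, -⟩, ⟨h2, -⟩⟩
      exact ⟨hl, h1, h2⟩
    · rintro ⟨-, h1, h2⟩
      exact ⟨⟨h1, ha⟩, ⟨h2, hb⟩⟩

lemma pfree_sdiff_pr {S : Finset (Fin (2*g))} {i : Fin g} (h : i ∈ pfull S) :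
    pfree (S \ pr i) = insert i (pfree S) := by
  ext l
  rw [mem_pfree, Finset.mem_insert, mem_pfree]
  by_cases hl : l = i
  · subst hl
    simp [Finset.mem_sdiff, mem_pr_self_a, mem_pr_self_b]
  · have ha : ai g l ∉ pr i := fun hc => hl (by rw [← pidx_ai l, mem_pr.1 hc])
    have hb : bi g l ∉ pr i := fun hc => hl (by rw [← pidx_bi l, mem_pr.1 hc])
    simp only [Finset.mem_sdiff]
    constructor
    · rintro ⟨h1, h2⟩
      push_neg at h1 h2
      exact Or.inr ⟨fun hc => ha (h1 hc), fun hc => hb (h2 hc)⟩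
    · rintro (rfl | ⟨h1, h2⟩)
      · exact absurd rfl hl
      · exact ⟨fun hc => h1 hc.1, fun hc => h2 hc.1⟩

/-- the fundamental double counting lemma -/
lemma double_count {ι : Type} [DecidableEq ι] (u : Finset ι) (a : ℕ) (F : Finset ι → ℤ) :
    ∑ i ∈ u, ∑ I ∈ (u.erase i).powersetCard a, F (insert i I)
      = ((a : ℤ) + 1) * ∑ J ∈ u.powersetCard (a + 1), F J := by
  have rhs : ((a:ℤ)+1) * ∑ J ∈ u.powersetCard (a+1), F J
      = ∑ J ∈ u.powersetCard (a+1), ∑ _i ∈ J, F J := by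
    rw [Finset.mul_sum]
    apply Finset.sum_congr rfl
    intro J hJ
    rw [Finset.mem_powersetCard] at hJ
    rw [Finset.sum_const, hJ.2]
    push_cast
    ring
  rw [rhs, Finset.sum_sigma' u _ (fun i I => F (insert i I)),
    Finset.sum_sigma' _ _ (fun J _ => F J)]
  apply Finset.sum_nbij' (i := fun x : Σ _ : ι, Finset ι => (⟨insert x.1 x.2, x.1⟩ : Σ _ : Finset ι, ι))
    (j := fun y : Σ _ : Finset ι, ι => (⟨y.2, y.1.erase y.2⟩ : Σ _ : ι, Finset ι))
  · rintro ⟨i, I⟩ hx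
    rw [Finset.mem_sigma] at hx
    obtain ⟨hi, hI⟩ := hx
    rw [Finset.mem_powersetCard] at hI
    rw [Finset.mem_sigma, Finset.mem_powersetCard]
    have hiI : i ∉ I := fun hc => (Finset.mem_erase.1 (hI.1 hc)).1 rfl
    refine ⟨⟨?_, ?_⟩, Finset.mem_insert_self _ _⟩
    · exact Finset.insert_subset hi (hI.1.trans (Finset.erase_subset i u))
    · rw [Finset.card_insert_of_notMem hiI, hI.2]
  · rintro ⟨J, i⟩ hy
    rw [Finset.mem_sigma] at hy
    obtain ⟨hJ, hi⟩ := hy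
    rw [Finset.mem_powersetCard] at hJ
    rw [Finset.mem_sigma, Finset.mem_powersetCard]
    refine ⟨hJ.1 hi, ?_, ?_⟩
    · intro x hx
      rw [Finset.mem_erase] at hx ⊢
      exact ⟨hx.1, hJ.1 hx.2⟩
    · rw [Finset.card_erase_of_mem hi, hJ.2]
      omega
  · rintro ⟨i, I⟩ hx
    rw [Finset.mem_sigma] at hx
    obtain ⟨-, hI⟩ := hx
    rw [Finset.mem_powersetCard] at hI
    have hiI : i ∉ I := fun hc => (Finset.mem_erase.1 (hI.1 hc)).1 rfl
    simp only
    congr 1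
    exact Finset.erase_insert hiI
  · rintro ⟨J, i⟩ hy
    rw [Finset.mem_sigma] at hy
    simp only
    have := Finset.insert_erase hy.2
    congr 1
  · rintro ⟨i, I⟩ _
    rfl

def Fdp (a : ℕ) (x : Lam ℤ g) : Lam ℤ g :=
  fun S => ∑ I ∈ (pfree S).powersetCard a, x (S ∪ elems I)
def Edp (m : ℕ) (x : Lam ℤ g) : Lam ℤ g :=
  fun S => ∑ I ∈ (pfull S).powersetCard m, x (S \ elems I)

lemma elems_empty : elems (∅ : Finset (Fin g)) = ∅ := by simp [elems]
lemma elems_insert (i : Fin g) (I : Finset (Fin g)) :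
    elems (insert i I) = pr i ∪ elems I := by
  rw [elems, elems, Finset.biUnion_insert]

lemma Fdp_zero (x : Lam ℤ g) : Fdp 0 x = x := by
  funext S
  rw [Fdp, Finset.powersetCard_zero, Finset.sum_singleton, elems_empty, Finset.union_empty]

lemma Edp_zero (x : Lam ℤ g) : Edp 0 x = x := by
  funext S
  rw [Edp, Finset.powersetCard_zero, Finset.sum_singleton, elems_empty, Finset.sdiff_empty]

lemma Fop_apply (x : Lam ℤ g) (S : Finset (Fin (2*g))) :
    Fop ℤ g x S = ∑ i ∈ pfree S, x (S ∪ pr i) := by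
  have e0 : Fop ℤ g x S
      = ∑ i ∈ pfree S, x (insert (ai g i) (insert (bi g i) S)) := rfl
  rw [e0]
  apply Finset.sum_congr rfl
  intro i _
  congr 1
  rw [pr]
  ext y
  simp [Finset.mem_union, Finset.mem_insert]

lemma Eop_apply (x : Lam ℤ g) (S : Finset (Fin (2*g))) :
    Eop ℤ g x S = ∑ i ∈ pfull S, x (S \ pr i) := rfl

lemma Fop_Fdp (a : ℕ) (x : Lam ℤ g) :
    Fop ℤ g (Fdp a x) = ((a : ℤ) + 1) • Fdp (a + 1) x := by
  funext S
  rw [Fop_apply, Pi.smul_apply, smul_eq_mul]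
  have e1 : ∀ i ∈ pfree S, Fdp a x (S ∪ pr i)
      = ∑ I ∈ ((pfree S).erase i).powersetCard a, x (S ∪ elems (insert i I)) := by
    intro i hi
    rw [Fdp, pfree_union_pr hi]
    apply Finset.sum_congr rfl
    intro I _
    congr 1
    rw [elems_insert, Finset.union_comm (pr i) (elems I), ← Finset.union_assoc,
      Finset.union_comm S (elems I), Finset.union_assoc, Finset.union_comm (pr i) (elems I)]
    rw [Finset.union_comm (elems I) S, ← Finset.union_assoc]
  rw [Finset.sum_congr rfl e1, double_count (pfree S) a (fun J => x (S ∪ elems J))]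
  rfl

lemma Eop_Edp (m : ℕ) (x : Lam ℤ g) :
    Eop ℤ g (Edp m x) = ((m : ℤ) + 1) • Edp (m + 1) x := by
  funext S
  rw [Eop_apply, Pi.smul_apply, smul_eq_mul]
  have e1 : ∀ i ∈ pfull S, Edp m x (S \ pr i)
      = ∑ I ∈ ((pfull S).erase i).powersetCard m, x (S \ elems (insert i I)) := by
    intro i hi
    rw [Edp, pfull_sdiff_pr hi]
    apply Finset.sum_congr rfl
    intro I _
    congr 1
    rw [elems_insert]
    ext y
    simp only [Finset.mem_sdiff, Finset.mem_union, not_or]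
    tauto
  rw [Finset.sum_congr rfl e1, double_count (pfull S) m (fun J => x (S \ elems J))]
  rfl

lemma Fpow_Fdp (a : ℕ) (x : Lam ℤ g) :
    ((Fop ℤ g) ^ a) x = ((a.factorial : ℤ)) • Fdp a x := by
  induction a with
  | zero => simp [Fdp_zero]
  | succ a ih =>
    rw [pow_succ', Module.End.mul_apply, ih, map_smul, Fop_Fdp]
    rw [smul_smul]
    congr 1
    push_cast [Nat.factorial_succ]
    ring

lemma Epow_Edp (m : ℕ) (x : Lam ℤ g) :
    ((Eop ℤ g) ^ m) x = ((m.factorial : ℤ)) • Edp m x := by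
  induction m with
  | zero => simp [Edp_zero]
  | succ m ih =>
    rw [pow_succ', Module.End.mul_apply, ih, map_smul, Eop_Edp]
    rw [smul_smul]
    congr 1
    push_cast [Nat.factorial_succ]
    ring


/-! new content -/

lemma full_not_free {S : Finset (Fin (2*g))} {i : Fin g} (h : i ∈ pfull S) :
    i ∉ pfree S := by
  rw [mem_pfull] at h
  rw [mem_pfree]
  tauto

lemma free_not_full {S : Finset (Fin (2*g))} {i : Fin g} (h : i ∈ pfree S) :
    i ∉ pfull S := by
  rw [mem_pfree] at h
  rw [mem_pfull]
  tauto

lemma pr_pr_disj {i l : Fin g} (h : i ≠ l) : ∀ y : Fin (2*g), y ∈ pr i → y ∉ pr l := by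
  intro y hy hc
  rw [mem_pr] at hy hc
  exact h (hy ▸ hc ▸ rfl)

/-- the cardinality bookkeeping -/
lemma card_key (S : Finset (Fin (2*g))) :
    S.card + (pfree S).card = g + (pfull S).card := by
  have fib : S.card = ∑ i ∈ Finset.univ, (S ∩ pr i).card := by
    rw [Finset.card_eq_sum_card_fiberwise (f := pidx) (t := Finset.univ)
      (fun x _ => Finset.mem_univ _)]
    apply Finset.sum_congr rfl
    intro i _
    congr 1
    ext x
    rw [Finset.mem_filter, Finset.mem_inter, mem_pr]
  have point : ∀ i : Fin g, (S ∩ pr i).card + (if i ∈ pfree S then 1 else 0)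
      = 1 + (if i ∈ pfull S then 1 else 0) := by
    intro i
    by_cases ha : ai g i ∈ S <;> by_cases hb : bi g i ∈ S
    · have hful : i ∈ pfull S := mem_pfull.2 ⟨ha, hb⟩
      have : S ∩ pr i = pr i := Finset.inter_eq_right.2 (pr_subset_iff.2 hful)
      rw [this, pr_card, if_pos hful, if_neg (full_not_free hful)]
    · have : S ∩ pr i = {ai g i} := by
        ext x
        rw [Finset.mem_inter, Finset.mem_singleton, pr]
        constructor
        · rintro ⟨hx, h⟩
          rcases Finset.mem_insert.1 h with rfl | h
          · rfl
          · rw [Finset.mem_singleton] at h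
            subst h
            exact absurd hx hb
        · rintro rfl
          exact ⟨ha, Finset.mem_insert_self _ _⟩
      rw [this, Finset.card_singleton,
        if_neg (by rw [mem_pfree]; tauto), if_neg (by rw [mem_pfull]; tauto)]
    · have : S ∩ pr i = {bi g i} := by
        ext x
        rw [Finset.mem_inter, Finset.mem_singleton, pr]
        constructor
        · rintro ⟨hx, h⟩
          rcases Finset.mem_insert.1 h with rfl | h
          · exact absurd hx ha
          · rwa [Finset.mem_singleton] at h
        · rintro rfl
          exact ⟨hb, Finset.mem_insert_of_mem (Finset.mem_singleton_self _)⟩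
      rw [this, Finset.card_singleton,
        if_neg (by rw [mem_pfree]; tauto), if_neg (by rw [mem_pfull]; tauto)]
    · have : S ∩ pr i = ∅ := by
        ext x
        rw [Finset.mem_inter, pr]
        simp only [Finset.notMem_empty, iff_false]
        rintro ⟨hx, h⟩
        rcases Finset.mem_insert.1 h with rfl | h
        · exact ha hx
        · rw [Finset.mem_singleton] at h
          subst h
          exact hb hx
      rw [this, Finset.card_empty,
        if_pos (mem_pfree.2 ⟨ha, hb⟩), if_neg (by rw [mem_pfull]; tauto)]
  have total := Finset.sum_congr rfl (fun i (_ : i ∈ (Finset.univ : Finset (Fin g))) => point i)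
  rw [Finset.sum_add_distrib, Finset.sum_add_distrib, ← fib] at total
  have c1 : ∑ i ∈ Finset.univ, (if i ∈ pfree S then 1 else 0) = (pfree S).card := by
    rw [Finset.sum_ite_mem, Finset.univ_inter, Finset.sum_const, smul_eq_mul, mul_one]
  have c2 : ∑ i ∈ Finset.univ, (if i ∈ pfull S then 1 else 0) = (pfull S).card := by
    rw [Finset.sum_ite_mem, Finset.univ_inter, Finset.sum_const, smul_eq_mul, mul_one]
  have c3 : ∑ _i ∈ (Finset.univ : Finset (Fin g)), 1 = g := by
    rw [Finset.sum_const, smul_eq_mul, mul_one, Finset.card_univ, Fintype.card_fin]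
  rw [c1, c2, c3] at total
  exact total

/-- the sl2 commutator -/
lemma comm (x : Lam ℤ g) (S : Finset (Fin (2*g))) :
    Fop ℤ g (Eop ℤ g x) S
      = Eop ℤ g (Fop ℤ g x) S + ((g:ℤ) - S.card) * x S := by
  have hff : ((pfree S).card : ℤ) - (pfull S).card = (g:ℤ) - S.card := by
    have := card_key S
    omega
  have e1 : ∀ i ∈ pfree S, Eop ℤ g x (S ∪ pr i)
      = x S + ∑ l ∈ pfull S, x ((S \ pr l) ∪ pr i) := by
    intro i hi
    rw [Eop_apply, pfull_union_pr hi, Finset.sum_insert (free_not_full hi)]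
    congr 1
    · congr 1
      ext y
      simp only [Finset.mem_sdiff, Finset.mem_union]
      have := Finset.disjoint_left.1 (free_disj hi)
      constructor
      · rintro ⟨hy | hy, hn⟩
        · exact hy
        · exact absurd hy hn
      · intro hy
        exact ⟨Or.inl hy, fun hc => this hc hy⟩
    · apply Finset.sum_congr rfl
      intro l hl
      congr 1
      have hil : i ≠ l := fun h => (free_not_full hi) (h ▸ hl)
      ext y
      simp only [Finset.mem_sdiff, Finset.mem_union]
      have d1 := pr_pr_disj hil
      constructor
      · rintro ⟨hy | hy, hn⟩
        · exact Or.inl ⟨hy, hn⟩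
        · exact Or.inr hy
      · rintro (⟨hy, hn⟩ | hy)
        · exact ⟨Or.inl hy, hn⟩
        · exact ⟨Or.inr hy, d1 y hy⟩
  have e2 : ∀ l ∈ pfull S, Fop ℤ g x (S \ pr l)
      = x S + ∑ i ∈ pfree S, x ((S \ pr l) ∪ pr i) := by
    intro l hl
    rw [Fop_apply, pfree_sdiff_pr hl, Finset.sum_insert (full_not_free hl)]
    congr 1
    congr 1
    rw [Finset.sdiff_union_of_subset (pr_subset_iff.2 hl)]
  rw [Fop_apply, Eop_apply, Finset.sum_congr rfl e1, Finset.sum_congr rfl e2,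
    Finset.sum_add_distrib, Finset.sum_add_distrib, Finset.sum_const, Finset.sum_const,
    Finset.sum_comm]
  simp only [smul_eq_mul, mul_comm]
  linear_combination (x S) * hff

/-- degree shifting for Eop -/
lemma Eop_deg {x : Lam ℤ g} {d : ℕ} (hx : ∀ S, S.card ≠ d → x S = 0) :
    ∀ S, S.card ≠ d + 2 → Eop ℤ g x S = 0 := by
  intro S hS
  rw [Eop_apply]
  apply Finset.sum_eq_zero
  intro i hi
  apply hx
  have hsub : pr i ⊆ S := pr_subset_iff.2 hi
  rw [Finset.card_sdiff_of_subset hsub, pr_card]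
  have : 2 ≤ S.card := by
    calc 2 = (pr i).card := (pr_card i).symm
    _ ≤ S.card := Finset.card_le_card hsub
  omega

lemma Epow_deg {f : Lam ℤ g} {d : ℕ} (hf : ∀ S, S.card ≠ d → f S = 0) :
    ∀ m S, S.card ≠ d + 2 * m → ((Eop ℤ g) ^ m) f S = 0 := by
  intro m
  induction m with
  | zero => simpa using hf
  | succ m ih =>
    intro S hS
    have e : ((Eop ℤ g) ^ (m+1)) f = Eop ℤ g (((Eop ℤ g) ^ m) f) := by
      rw [pow_succ', Module.End.mul_apply]
    rw [e]
    exact Eop_deg (d := d + 2*m) ih S (by omega)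

/-- the string identity -/
lemma string {f : Lam ℤ g} {d : ℕ} (hf : ∀ S, S.card ≠ d → f S = 0)
    (hprim : Fop ℤ g f = 0) :
    ∀ m : ℕ, Fop ℤ g (((Eop ℤ g) ^ (m+1)) f)
      = (((m:ℤ)+1) * ((g:ℤ) - d - m)) • (((Eop ℤ g) ^ m) f) := by
  intro m
  induction m with
  | zero =>
    funext S
    have e : ((Eop ℤ g) ^ 1) f = Eop ℤ g f := by rw [pow_one]
    rw [e]
    rw [comm f S, hprim]
    simp only [map_zero, Pi.zero_apply, zero_add, pow_zero, Module.End.one_apply,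
      Pi.smul_apply, smul_eq_mul]
    by_cases h : f S = 0
    · rw [h]; ring
    · have hc : S.card = d := by
        by_contra hc
        exact h (hf S hc)
      have : (S.card : ℤ) = (d : ℤ) := by rw [hc]
      rw [this]
      ring
  | succ m ih =>
    funext S
    have e : ((Eop ℤ g) ^ (m+2)) f = Eop ℤ g (((Eop ℤ g) ^ (m+1)) f) := by
      rw [pow_succ', Module.End.mul_apply]
    rw [e, comm, ih, map_smul]
    have hv : ∀ v : ℤ, (((Eop ℤ g) ^ (m+1)) f) S = v → v ≠ 0 → S.card = d + 2*(m+1) := by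
      intro v hv hvne
      by_contra hc
      exact hvne (hv ▸ Epow_deg hf (m+1) S hc)
    set v := (((Eop ℤ g) ^ (m+1)) f) S with hvdef
    have e2 : Eop ℤ g (((Eop ℤ g) ^ m) f) = ((Eop ℤ g) ^ (m+1)) f := by
      rw [pow_succ', Module.End.mul_apply]
    simp only [Pi.smul_apply, smul_eq_mul, e2]
    by_cases h0 : v = 0
    · rw [← hvdef, h0]; ring
    · have hc := hv v rfl h0
      rw [← hvdef]
      have : (S.card : ℤ) = (d:ℤ) + 2*(m+1) := by rw [hc]; push_cast; ring
      rw [this]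
      push_cast
      ring


/-! new -/

lemma chain {g : ℕ} {f : Lam ℤ g} {d : ℕ} (hf : ∀ S, S.card ≠ d → f S = 0)
    (hprim : Fop ℤ g f = 0) {P : ℤ} {k : ℕ}
    (hdvd : P ∣ (((k - 1 : ℕ) : ℤ) + 1) * ((g:ℤ) - d - ((k - 1 : ℕ) : ℤ))) :
    ∀ a, a ≤ k → ∃ c : ℤ,
      ((Fop ℤ g) ^ a) (((Eop ℤ g) ^ k) f) = c • (((Eop ℤ g) ^ (k - a)) f)
      ∧ (1 ≤ a → P ∣ c) := by
  intro a
  induction a with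
  | zero =>
    intro _
    exact ⟨1, by rw [pow_zero, Module.End.one_apply, Nat.sub_zero, one_smul], by omega⟩
  | succ a ih =>
    intro hak
    obtain ⟨c, hc, hcd⟩ := ih (by omega)
    have hstep : ((Fop ℤ g) ^ (a+1)) (((Eop ℤ g) ^ k) f)
        = Fop ℤ g (((Fop ℤ g) ^ a) (((Eop ℤ g) ^ k) f)) := by
      rw [pow_succ', Module.End.mul_apply]
    have hka : k - a = (k - a - 1) + 1 := by omega
    set m := k - a - 1 with hm
    have hscal := string hf hprim m
    refine ⟨c * (((m:ℤ)+1) * ((g:ℤ) - d - m)), ?_, ?_⟩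
    · have hke : k - (a + 1) = m := by omega
      rw [hke, hstep, hc, map_smul, hka, hscal, smul_smul]
    · intro _
      by_cases ha : a = 0
      · subst ha
        have hm' : m = k - 1 := by omega
        rw [hm']
        exact Dvd.dvd.mul_left hdvd c
      · exact Dvd.dvd.mul_right (hcd (by omega)) _
    
lemma Fpow_Ek_zero {g : ℕ} {f : Lam ℤ g} {d : ℕ} (hf : ∀ S, S.card ≠ d → f S = 0)
    (hprim : Fop ℤ g f = 0) {k : ℕ} :
    ∀ a, k < a → ((Fop ℤ g) ^ a) (((Eop ℤ g) ^ k) f) = 0 := by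
  have base : ((Fop ℤ g) ^ (k+1)) (((Eop ℤ g) ^ k) f) = 0 := by
    obtain ⟨c, hc, -⟩ := chain hf hprim (P := 1) (k := k) (one_dvd _) k le_rfl
    rw [pow_succ', Module.End.mul_apply, hc, Nat.sub_self, pow_zero, Module.End.one_apply,
      map_smul, hprim, smul_zero]
  intro a ha
  have : a = (a - (k+1)) + (k+1) := by omega
  rw [this, pow_add, Module.End.mul_apply, base, map_zero]

lemma DIV {g : ℕ} (p : ℕ) (hp : p.Prime) {k : ℕ} (hk : k < p)
    {f : Lam ℤ g} {d : ℕ} (hf : ∀ S, S.card ≠ d → f S = 0)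
    (hprim : Fop ℤ g f = 0)
    (hdvd : (p:ℤ) ∣ (((k - 1 : ℕ) : ℤ) + 1) * ((g:ℤ) - d - ((k - 1 : ℕ) : ℤ))) :
    ∀ a, 1 ≤ a → ∀ S, (p:ℤ) ∣ Fdp a (((Eop ℤ g) ^ k) f) S := by
  intro a ha S
  have hfd := congrFun (Fpow_Fdp a (((Eop ℤ g) ^ k) f)) S
  rw [Pi.smul_apply, smul_eq_mul] at hfd
  by_cases hak : a ≤ k
  · obtain ⟨c, hc, hcd⟩ := chain hf hprim hdvd a hak
    have hpt : (a.factorial : ℤ) * Fdp a (((Eop ℤ g) ^ k) f) S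
        = c * (((Eop ℤ g) ^ (k - a)) f S) := by
      rw [← hfd, hc, Pi.smul_apply, smul_eq_mul]
    have hdvd2 : (p:ℤ) ∣ (a.factorial : ℤ) * Fdp a (((Eop ℤ g) ^ k) f) S := by
      rw [hpt]
      exact Dvd.dvd.mul_right (hcd ha) _
    have hpz : Prime ((p:ℕ) : ℤ) := Int.prime_iff_natAbs_prime.2 (by simpa using hp)
    rcases (hpz.dvd_mul.1 hdvd2) with h | h
    · exfalso
      rw [Int.natCast_dvd_natCast] at h
      have h2 : p ≤ a := (Nat.Prime.dvd_factorial hp).1 h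
      omega
    · exact h
  · have hz := Fpow_Ek_zero (k := k) hf hprim a (by omega)
    rw [hz] at hfd
    have : Fdp a (((Eop ℤ g) ^ k) f) S = 0 := by
      have hne : (a.factorial : ℤ) ≠ 0 := by
        exact_mod_cast Nat.factorial_ne_zero a
      have := hfd.symm
      rcases mul_eq_zero.1 this with h | h
      · exact absurd h hne
      · exact h
    rw [this]
    exact dvd_zero _


def rim {g : ℕ} (S : Finset (Fin (2*g))) : Finset (Fin (2*g)) := S \ elems (pfull S)

lemma mem_rim {g : ℕ} {S : Finset (Fin (2*g))} {x : Fin (2*g)} :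
    x ∈ rim S ↔ x ∈ S ∧ pidx x ∉ pfull S := by
  rw [rim, Finset.mem_sdiff, mem_elems]

lemma elems_sub {g : ℕ} {S : Finset (Fin (2*g))} : elems (pfull S) ⊆ S := by
  intro x hx
  rw [mem_elems, mem_pfull] at hx
  have hxpr : x ∈ pr (pidx x) := mem_pr.2 rfl
  rcases Finset.mem_insert.1 hxpr with h | h
  · exact h ▸ hx.1
  · rw [Finset.mem_singleton] at h
    exact h ▸ hx.2

lemma decomp {g : ℕ} (S : Finset (Fin (2*g))) : rim S ∪ elems (pfull S) = S := by
  ext x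
  rw [Finset.mem_union, mem_rim]
  constructor
  · rintro (⟨h, -⟩ | h)
    · exact h
    · exact elems_sub h
  · intro h
    by_cases hx : pidx x ∈ pfull S
    · exact Or.inr (mem_elems.2 hx)
    · exact Or.inl ⟨h, hx⟩

lemma pfull_rim {g : ℕ} (S : Finset (Fin (2*g))) : pfull (rim S) = ∅ := by
  ext i
  simp only [Finset.notMem_empty, iff_false]
  intro h
  rw [mem_pfull] at h
  obtain ⟨h1, h2⟩ := h
  rw [mem_rim] at h1 h2
  rw [pidx_ai] at h1
  exact h1.2 (mem_pfull.2 ⟨h1.1, h2.1⟩)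

lemma core_sub {g : ℕ} (S : Finset (Fin (2*g))) : pfull S ⊆ pfree (rim S) := by
  intro i hi
  rw [mem_pfree]
  constructor
  · intro hc
    rw [mem_rim, pidx_ai] at hc
    exact hc.2 hi
  · intro hc
    rw [mem_rim, pidx_bi] at hc
    exact hc.2 hi

lemma recover_full {g : ℕ} {ρ : Finset (Fin (2*g))} (hρ : pfull ρ = ∅)
    (B : Finset (Fin g)) : pfull (ρ ∪ elems B) = B := by
  ext l
  rw [mem_pfull]
  simp only [Finset.mem_union, mem_elems, pidx_ai, pidx_bi]
  constructor
  · rintro ⟨h1 | h1, h2 | h2⟩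
    · exfalso
      have : l ∈ pfull ρ := mem_pfull.2 ⟨h1, by
        rcases h2 with h2
        exact absurd h2 (by
          intro hc
          exact (by simp [hρ] : l ∉ pfull ρ) (mem_pfull.2 ⟨h1, hc⟩))⟩
      simp [hρ] at this
    · exact h2
    · exact h1
    · exact h1
  · intro h
    exact ⟨Or.inr h, Or.inr h⟩

lemma disj_rho_elems {g : ℕ} {ρ : Finset (Fin (2*g))} {B : Finset (Fin g)}
    (hB : B ⊆ pfree ρ) : ∀ x, x ∈ elems B → x ∉ ρ := by
  intro x hx hc
  rw [mem_elems] at hx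
  have := mem_pfree.1 (hB hx)
  have hxpr : x ∈ pr (pidx x) := mem_pr.2 rfl
  rcases Finset.mem_insert.1 hxpr with h | h
  · exact this.1 (h ▸ hc)
  · rw [Finset.mem_singleton] at h
    exact this.2 (h ▸ hc)

lemma recover_rim {g : ℕ} {ρ : Finset (Fin (2*g))} (hρ : pfull ρ = ∅)
    {B : Finset (Fin g)} (hB : B ⊆ pfree ρ) : rim (ρ ∪ elems B) = ρ := by
  rw [rim, recover_full hρ B]
  ext x
  rw [Finset.mem_sdiff, Finset.mem_union]
  constructor
  · rintro ⟨h1 | h1, h2⟩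
    · exact h1
    · exact absurd h1 h2
  · intro h
    exact ⟨Or.inl h, fun hc => disj_rho_elems hB x hc h⟩

lemma pfree_union_elems {g : ℕ} (ρ : Finset (Fin (2*g))) (B : Finset (Fin g)) :
    pfree (ρ ∪ elems B) = pfree ρ \ B := by
  ext i
  rw [mem_pfree, Finset.mem_sdiff, mem_pfree]
  simp only [Finset.mem_union, mem_elems, pidx_ai, pidx_bi, not_or]
  tauto

lemma elems_card {g : ℕ} (B : Finset (Fin g)) : (elems B).card = 2 * B.card := by
  rw [elems, Finset.card_biUnion]
  · rw [Finset.sum_congr rfl (fun i _ => pr_card i), Finset.sum_const, smul_eq_mul,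
      Nat.mul_comm]
  · intro i hi l hl hne
    rw [Function.onFun, Finset.disjoint_left]
    exact fun y hy => pr_pr_disj hne y hy

lemma card_union_elems {g : ℕ} {ρ : Finset (Fin (2*g))} {B : Finset (Fin g)}
    (hB : B ⊆ pfree ρ) : (ρ ∪ elems B).card = ρ.card + 2 * B.card := by
  rw [Finset.card_union_of_disjoint, elems_card]
  rw [Finset.disjoint_right]
  exact fun x hx => fun hc => disj_rho_elems hB x hx hc

lemma elems_union {g : ℕ} (I J : Finset (Fin g)) :
    elems (I ∪ J) = elems I ∪ elems J := by
  ext x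
  simp [mem_elems, Finset.mem_union]

def blk {g : ℕ} (x : Lam ℤ g) (ρ : Finset (Fin (2*g))) : Finset (Fin g) → ℤ :=
  fun B => if B ⊆ pfree ρ then x (ρ ∪ elems B) else 0

lemma rim_union_pr {g : ℕ} {S : Finset (Fin (2*g))} {i : Fin g} (hi : i ∈ pfree S) :
    rim (S ∪ pr i) = rim S := by
  rw [rim, pfull_union_pr hi]
  have he : elems (insert i (pfull S)) = pr i ∪ elems (pfull S) := by
    rw [elems, Finset.biUnion_insert]; rfl
  rw [he]
  ext x
  rw [Finset.mem_sdiff, Finset.mem_union, Finset.mem_union, mem_rim]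
  have hd := Finset.disjoint_left.1 (free_disj hi)
  constructor
  · rintro ⟨h1 | h1, h2⟩
    · push_neg at h2
      exact ⟨h1, fun hc => h2.2 (mem_elems.2 hc)⟩
    · exfalso
      push_neg at h2
      exact h2.1 h1
  · rintro ⟨h1, h2⟩
    constructor
    · exact Or.inl h1
    · push_neg
      exact ⟨fun hc => hd hc h1, fun hc => h2 (mem_elems.1 hc)⟩

lemma T1 {g : ℕ} (p : ℕ) {x : Lam ℤ g} {D : ℕ}
    (hx : ∀ S, S.card ≠ D → x S = 0)
    (hdiv : ∀ a, 1 ≤ a → ∀ S, (p:ℤ) ∣ Fdp a x S)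
    {ρ : Finset (Fin (2*g))} (hρ : pfull ρ = ∅) {r : ℕ} (hr : ρ.card + 2*r = D) :
    ∀ G, G ⊆ pfree ρ → G.card < r → (p:ℤ) ∣ CubeX.sh (pfree ρ) (blk x ρ) G := by
  intro G hG hGr
  rw [CubeX.sh]
  have e1 : ∀ T ∈ (pfree ρ \ G).powerset,
      blk x ρ (G ∪ T) = x ((ρ ∪ elems G) ∪ elems T) := by
    intro T hT
    rw [Finset.mem_powerset] at hT
    have hsub : G ∪ T ⊆ pfree ρ :=
      Finset.union_subset hG (hT.trans Finset.sdiff_subset)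
    simp only [blk]
    rw [if_pos hsub, elems_union, ← Finset.union_assoc]
  rw [Finset.sum_congr rfl e1, Finset.sum_powerset]
  apply Finset.dvd_sum
  intro c _
  have hfree : pfree (ρ ∪ elems G) = pfree ρ \ G := pfree_union_elems ρ G
  have e2 : ∑ T ∈ (pfree ρ \ G).powersetCard c, x ((ρ ∪ elems G) ∪ elems T)
      = Fdp c x (ρ ∪ elems G) := by
    rw [Fdp, hfree]
  rw [e2]
  rcases Nat.eq_zero_or_pos c with rfl | hc1
  · rw [Fdp, Finset.powersetCard_zero, Finset.sum_singleton]
    have h0 : x ((ρ ∪ elems G) ∪ elems ∅) = 0 := by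
      apply hx
      rw [show elems (∅ : Finset (Fin g)) = ∅ from by simp [elems], Finset.union_empty,
        card_union_elems hG]
      omega
    rw [h0]
    exact dvd_zero _
  · exact hdiv c hc1 _

lemma blk_RS {g : ℕ} {x : Lam ℤ g} {D : ℕ}
    (hx : ∀ S, S.card ≠ D → x S = 0)
    {ρ : Finset (Fin (2*g))} {r : ℕ} (hr : ρ.card + 2*r = D) :
    CubeX.RS (pfree ρ) r (blk x ρ) := by
  intro B hB
  simp only [blk] at hB
  by_cases hs : B ⊆ pfree ρ
  · rw [if_pos hs] at hB
    refine ⟨hs, ?_⟩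
    have hcard : (ρ ∪ elems B).card = D := by
      by_contra hc
      exact hB (hx _ hc)
    rw [card_union_elems hs] at hcard
    omega
  · rw [if_neg hs] at hB
    exact absurd rfl hB

lemma per_block {g : ℕ} (p : ℕ) {x : Lam ℤ g} {D : ℕ}
    (hx : ∀ S, S.card ≠ D → x S = 0)
    (hdiv : ∀ a, 1 ≤ a → ∀ S, (p:ℤ) ∣ Fdp a x S) (hD : D ≤ g) :
    ∀ ρ : Finset (Fin (2*g)), pfull ρ = ∅ →
    ∃ uρ : Finset (Fin g) → ℤ,
      (∀ B, uρ B ≠ 0 → B ⊆ pfree ρ ∧ ρ.card + 2 * B.card = D) ∧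
      (∀ B, (p:ℤ) ∣ blk x ρ B - uρ B) ∧
      (∀ B, ∑ i ∈ pfree ρ \ B, uρ (insert i B) = 0) := by
  intro ρ hρ
  by_cases hex : ∃ r, ρ.card + 2 * r = D
  · obtain ⟨r, hr⟩ := hex
    have hfreecard : ρ.card + (pfree ρ).card = g := by
      have h := card_key ρ
      rw [hρ] at h
      simpa using h
    have h2r : 2 * r ≤ (pfree ρ).card := by omega
    obtain ⟨u, huspan, hucong⟩ := CubeX.CS (p:ℤ) (pfree ρ) r (blk x ρ)
      (blk_RS hx hr) h2r (T1 p hx hdiv hρ hr)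
    refine ⟨u, ?_, hucong, ?_⟩
    · intro B hB
      by_contra hc
      apply hB
      apply CubeX.span_RS huspan
      rintro ⟨h1, h2⟩
      exact hc ⟨h1, by omega⟩
    · intro B
      exact CubeX.span_ash huspan B
  · refine ⟨0, ?_, ?_, ?_⟩
    · intro B hB
      simp at hB
    · intro B
      rw [Pi.zero_apply, sub_zero]
      simp only [blk]
      by_cases hs : B ⊆ pfree ρ
      · rw [if_pos hs]
        have h0 : x (ρ ∪ elems B) = 0 := by
          apply hx
          rw [card_union_elems hs]
          exact fun hc => hex ⟨B.card, hc⟩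
        rw [h0]
        exact dvd_zero _
      · rw [if_neg hs]
        exact dvd_zero _
    · intro B
      simp

theorem global {g : ℕ} (p : ℕ) {x : Lam ℤ g} {D : ℕ}
    (hx : ∀ S, S.card ≠ D → x S = 0)
    (hdiv : ∀ a, 1 ≤ a → ∀ S, (p:ℤ) ∣ Fdp a x S) (hD : D ≤ g) :
    ∃ u : Lam ℤ g, Fop ℤ g u = 0 ∧ (∀ S, S.card ≠ D → u S = 0) ∧
      ∀ S, (p:ℤ) ∣ x S - u S := by
  choose Ufun hU1 hU2 hU3 using per_block p hx hdiv hD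
  set V : Finset (Fin (2*g)) → Finset (Fin g) → ℤ :=
    fun ρ => if h : pfull ρ = ∅ then Ufun ρ h else 0 with hV
  have hV1 : ∀ ρ (h : pfull ρ = ∅), V ρ = Ufun ρ h := fun ρ h => dif_pos h
  set u : Lam ℤ g := fun S => V (rim S) (pfull S) with hu
  have hcardS : ∀ S : Finset (Fin (2*g)), S.card = (rim S).card + 2 * (pfull S).card := by
    intro S
    conv_lhs => rw [← decomp S]
    exact card_union_elems (core_sub S)
  refine ⟨u, ?_, ?_, ?_⟩
  · funext S₀
    show Fop ℤ g u S₀ = 0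
    rw [Fop_apply]
    have e1 : ∀ i ∈ pfree S₀, u (S₀ ∪ pr i) = V (rim S₀) (insert i (pfull S₀)) := by
      intro i hi
      simp only [hu]
      rw [rim_union_pr hi, pfull_union_pr hi]
    rw [Finset.sum_congr rfl e1]
    have e2 : pfree S₀ = pfree (rim S₀) \ pfull S₀ := by
      conv_lhs => rw [← decomp S₀]
      exact pfree_union_elems _ _
    rw [e2, hV1 _ (pfull_rim S₀)]
    exact hU3 (rim S₀) (pfull_rim S₀) (pfull S₀)
  · intro S hS
    simp only [hu]
    rw [hV1 _ (pfull_rim S)]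
    by_contra hne
    obtain ⟨h1, h2⟩ := hU1 (rim S) (pfull_rim S) (pfull S) hne
    exact hS ((hcardS S).trans h2)
  · intro S
    have ex : x S = blk x (rim S) (pfull S) := by
      simp only [blk]
      rw [if_pos (core_sub S), decomp S]
    rw [ex]
    simp only [hu]
    rw [hV1 _ (pfull_rim S)]
    exact hU2 (rim S) (pfull_rim S) (pfull S)


end PairX

open PairX in
theorem Ek_well_defined_mod_p (p g j k : ℕ) (hp : p.Prime) (hodd : Odd p)
    (hk0 : 0 < k) (hkp : k < p) (hmod : (j : ZMod p) = (k : ZMod p))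
    (hj : j ≤ g + 1)
    (f : Lam ℤ g) (hprim : Fop ℤ g f = 0) (hdeg : f ∈ Ldeg ℤ g (g + 1 - j)) :
    (∃ u w : Lam ℤ g, Fop ℤ g u = 0 ∧ u ∈ Ldeg ℤ g (g + 1 - j + 2 * k) ∧
      ((Eop ℤ g) ^ k) f = u + (p : ℤ) • w) ∧
    (∃ w : Lam ℤ g, ((Eop ℤ g) ^ p) f = (p : ℤ) • w) := by
  have hf : ∀ S, S.card ≠ g + 1 - j → f S = 0 := hdeg
  set d : ℕ := g + 1 - j with hd
  have hdZ : (d : ℤ) = (g : ℤ) + 1 - j := by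
    rw [hd]
    push_cast [Nat.cast_sub hj]
    ring
  -- divisibility of j - k
  have hpd : (p:ℤ) ∣ (j:ℤ) - (k:ℤ) := by
    have h0 : (((j:ℤ) - (k:ℤ) : ℤ) : ZMod p) = 0 := by
      push_cast
      rw [hmod]
      ring
    exact (ZMod.intCast_zmod_eq_zero_iff_dvd _ p).1 h0
  have hsplit : j = k ∨ k + p ≤ j := by
    obtain ⟨t, ht⟩ := hpd
    rcases lt_trichotomy t 0 with h | h | h
    · exfalso
      have h1 : (p:ℤ) * t ≤ (p:ℤ) * (-1) := by
        apply mul_le_mul_of_nonneg_left (by omega) (by positivity)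
      omega
    · left
      rw [h, mul_zero] at ht
      omega
    · right
      have h1 : (p:ℤ) * 1 ≤ (p:ℤ) * t := by
        apply mul_le_mul_of_nonneg_left (by omega) (by positivity)
      omega
  constructor
  · -- part 1
    rcases hsplit with hjk | hjk
    · -- trivial case j = k : E^k f is itself primitive
      refine ⟨((Eop ℤ g) ^ k) f, 0, ?_, ?_, by rw [smul_zero, add_zero]⟩
      · have hk1 : k = (k - 1) + 1 := by omega
        rw [hk1, string hf hprim (k-1)]
        have hz : (((k-1:ℕ):ℤ)+1) * ((g:ℤ) - d - ((k-1:ℕ):ℤ)) = 0 := by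
          have h1 : ((k-1:ℕ):ℤ) = (k:ℤ) - 1 := by
            push_cast [Nat.cast_sub hk0]
            ring
          rw [h1, hdZ]
          have hjkZ : (j:ℤ) = (k:ℤ) := by exact_mod_cast hjk
          rw [← hjkZ]
          ring
        rw [hz, zero_smul]
      · intro S hS
        exact Epow_deg hf k S hS
    · -- main case k + p ≤ j
      have h2k : 2 * k + 1 ≤ j := by omega
      have hx : ∀ S, S.card ≠ d + 2 * k → ((Eop ℤ g) ^ k) f S = 0 := Epow_deg hf k
      have hdvd' : (p:ℤ) ∣ (((k-1:ℕ):ℤ)+1) * ((g:ℤ) - d - ((k-1:ℕ):ℤ)) := by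
        have h1 : ((k-1:ℕ):ℤ) = (k:ℤ) - 1 := by
          push_cast [Nat.cast_sub hk0]
          ring
        rw [h1, hdZ]
        have e : ((k:ℤ)-1+1) * ((g:ℤ) - ((g:ℤ)+1-j) - ((k:ℤ)-1)) = (k:ℤ) * ((j:ℤ) - k) := by
          ring
        rw [e]
        exact Dvd.dvd.mul_left hpd (k:ℤ)
      have hdiv := DIV p hp hkp hf hprim hdvd'
      have hD : d + 2 * k ≤ g := by omega
      obtain ⟨u, hu1, hu2, hu3⟩ := global p hx hdiv hD
      refine ⟨u, fun S => (((Eop ℤ g) ^ k) f S - u S) / p, hu1, ?_, ?_⟩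
      · intro S hS
        exact hu2 S hS
      · funext S
        show ((Eop ℤ g) ^ k) f S = u S + (p:ℤ) * ((((Eop ℤ g) ^ k) f S - u S) / p)
        rw [Int.mul_ediv_cancel' (hu3 S)]
        ring
  · -- part 2
    refine ⟨(((p-1).factorial : ℤ)) • Edp p f, ?_⟩
    rw [Epow_Edp, smul_smul]
    congr 1
    have := Nat.mul_factorial_pred hp.ne_zero
    exact_mod_cast this.symm
end
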